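/- arXiv:1605.09071 — 2 statements merged into one kernel-verified Lean document; each statement's English description precedes it below -/
import Mathlib

section
/- For any n-bit partial function f and any positive integer m, R₀(f^{⊕m}) = m · R₀(f). Moreover, if μ is a hard distribution for f, then μ^{⊗m} is a hard distribution for f^{⊕m}: every zero-error randomized algorithm for f^{⊕m} makes at least m · R₀(f) expected queries on inputs drawn from μ^{⊗m}. Similarly, for every ε ∈ [0, 1/2), R̄_ε(f^{⊕m}) ≥ m · R̄_ε(f). -/
/-! ### Decision trees -/

/-- A deterministic decision tree querying positions of type `ι`, receiving answers
in `α`, and producing an output in `β`. -/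
inductive DTree (ι α β : Type) : Type
  | leaf (b : β) : DTree ι α β
  | node (i : ι) (next : α → DTree ι α β) : DTree ι α β

namespace DTree

variable {ι α β : Type}

/-- The output of a decision tree on input `x`. -/
def output : DTree ι α β → (ι → α) → β
  | leaf b, _ => b
  | node i next, x => (next (x i)).output x

/-- The number of queries made by a decision tree on input `x`. -/
def cost : DTree ι α β → (ι → α) → ℕ
  | leaf _, _ => 0
  | node i next, x => (next (x i)).cost x + 1

/-- The set of positions queried by a decision tree on input `x`. -/
def queries : DTree ι α β → (ι → α) → Set ι
  | leaf _, _ => ∅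
  | node i next, x => insert i ((next (x i)).queries x)

end DTree

/-- A partial function on inputs `ι → α` with outputs in `β`; `none` means undefined
(the domain is the set of inputs mapped to `some` value). -/
abbrev PFn (ι α β : Type) := (ι → α) → Option β

/-- `t` computes the partial function `f` (correct on every input of the domain). -/
def DTree.computesP {ι α β : Type} (t : DTree ι α β) (f : PFn ι α β) : Prop :=
  ∀ x b, f x = some b → t.output x = b

/-- Deterministic query complexity `D(f)`. -/
noncomputable def Dq {ι α β : Type} (f : PFn ι α β) : ℝ :=
  sInf {T : ℝ | 0 ≤ T ∧ ∃ t : DTree ι α β, t.computesP f ∧ ∀ x, (t.cost x : ℝ) ≤ T}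

/-! ### Randomized query algorithms -/

/-- A randomized query algorithm: a finitely supported probability distribution over
deterministic decision trees. -/
structure RandAlg (ι α β : Type) where
  Ω : Type
  [fin : Fintype Ω]
  p : Ω → ℝ
  nonneg : ∀ ω, 0 ≤ p ω
  sum_one : ∑ ω, p ω = 1
  tree : Ω → DTree ι α β

namespace RandAlg

variable {ι α β : Type}

/-- Expected number of queries of `A` on input `x`. -/
noncomputable def expCost (A : RandAlg ι α β) (x : ι → α) : ℝ :=
  letI := A.fin
  ∑ ω, A.p ω * ((A.tree ω).cost x : ℝ)

open Classical in
/-- Probability that `A` outputs `b` on input `x`. -/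
noncomputable def succProb (A : RandAlg ι α β) (x : ι → α) (b : β) : ℝ :=
  letI := A.fin
  ∑ ω, if (A.tree ω).output x = b then A.p ω else 0

/-- `A` computes `f` with error at most `ε`: on every input of the domain the correct
output is produced with probability at least `1 - ε`. -/
def Computes (A : RandAlg ι α β) (f : PFn ι α β) (ε : ℝ) : Prop :=
  ∀ x b, f x = some b → 1 - ε ≤ A.succProb x b

/-- The worst-case cost of `A` (over all inputs and all trees in the support) is at most `T`. -/
def WCostLe (A : RandAlg ι α β) (T : ℝ) : Prop :=
  ∀ ω, A.p ω ≠ 0 → ∀ x, ((A.tree ω).cost x : ℝ) ≤ T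

/-- The expected cost of `A` on every input of the domain of `f` is at most `T`. -/
def ECostLe (A : RandAlg ι α β) (f : PFn ι α β) (T : ℝ) : Prop :=
  ∀ x, (f x).isSome → A.expCost x ≤ T

end RandAlg

/-- `R_ε(f)`: minimum worst-case cost of an `ε`-error randomized algorithm for `f`. -/
noncomputable def Rw {ι α β : Type} (ε : ℝ) (f : PFn ι α β) : ℝ :=
  sInf {T : ℝ | 0 ≤ T ∧ ∃ A : RandAlg ι α β, A.Computes f ε ∧ A.WCostLe T}

/-- `R̄_ε(f)`: minimum expected cost of an `ε`-error randomized algorithm for `f`. -/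
noncomputable def Rbar {ι α β : Type} (ε : ℝ) (f : PFn ι α β) : ℝ :=
  sInf {T : ℝ | 0 ≤ T ∧ ∃ A : RandAlg ι α β, A.Computes f ε ∧ A.ECostLe f T}

/-- `R₀(f)`: zero-error expected randomized query complexity. -/
noncomputable def R0 {ι α β : Type} (f : PFn ι α β) : ℝ := Rbar 0 f

/-- `R(f) := R_{1/3}(f)`: bounded-error randomized query complexity. -/
noncomputable def Rb {ι α β : Type} (f : PFn ι α β) : ℝ := Rw (1/3) f

/-- The total function `f` viewed as a partial function. -/
def tot {ι α β : Type} (f : (ι → α) → β) : PFn ι α β := fun x => some (f x)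

/-! ### Direct sums, distributions, and certificates -/

open Classical in
/-- The `m`-fold direct sum `f^{⊕m}`: given `m` independent inputs to `f`, output the
tuple of the `m` values of `f`. -/
noncomputable def dsum {ι α β : Type} (m : ℕ) (f : PFn ι α β) :
    PFn (Fin m × ι) α (Fin m → β) :=
  fun x =>
    if h : ∀ i : Fin m, (f fun j => x (i, j)).isSome then
      some fun i => (f fun j => x (i, j)).get (h i)
    else none

/-- A finitely supported probability distribution. -/
structure FinDist (γ : Type) where
  support : Finset γ
  p : γ → ℝ
  nonneg : ∀ z, 0 ≤ p z
  zero_off : ∀ z ∉ support, p z = 0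
  sum_one : ∑ z ∈ support, p z = 1

/-- `μ` is a hard distribution for `f` (as given by Yao's minimax theorem): it is
supported on the domain of `f` and every zero-error randomized algorithm for `f` makes
at least `R₀(f)` expected queries on inputs drawn from `μ`. -/
def IsHardDist {ι α β : Type} (μ : FinDist (ι → α)) (f : PFn ι α β) : Prop :=
  (∀ x ∈ μ.support, (f x).isSome) ∧
  ∀ A : RandAlg ι α β, A.Computes f 0 →
    R0 f ≤ ∑ x ∈ μ.support, μ.p x * A.expCost x

/-- `S` is a certificate for `f` at `x`: `x` is in the domain of `f` and the values of
`x` on `S` determine the value of `f` on every domain input consistent with them. -/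
def IsCert {ι α β : Type} (f : PFn ι α β) (S : Set ι) (x : ι → α) : Prop :=
  (f x).isSome ∧ ∀ y, (f y).isSome → (∀ i ∈ S, y i = x i) → f y = f x

/-- The tree `t`, run on the direct-sum input `z`, solves the `i`-th instance of `f` if
the positions of the `i`-th instance it queries form a certificate for that instance. -/
def SolvesInstance {m : ℕ} {ι α β γ : Type} (f : PFn ι α β)
    (t : DTree (Fin m × ι) α γ) (z : Fin m × ι → α) (i : Fin m) : Prop :=
  IsCert f {j | (i, j) ∈ t.queries z} fun j => z (i, j)

open Classical in
/-- The number of the `m` instances solved by `t` on the direct-sum input `z`. -/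
noncomputable def solvedCount {m : ℕ} {ι α β γ : Type} (f : PFn ι α β)
    (t : DTree (Fin m × ι) α γ) (z : Fin m × ι → α) : ℕ :=
  (Finset.univ.filter fun i : Fin m => SolvesInstance f t z i).card

/-- Expected number of instances of `f` solved by the randomized algorithm `A` on the
direct-sum input `z`. -/
noncomputable def RandAlg.expSolved {m : ℕ} {ι α β γ : Type}
    (A : RandAlg (Fin m × ι) α γ) (f : PFn ι α β) (z : Fin m × ι → α) : ℝ :=
  letI := A.fin
  ∑ ω, A.p ω * (solvedCount f (A.tree ω) z : ℝ)

open Classical in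
/-- Probability that the positions queried by `A` on `x` form a certificate for `f`. -/
noncomputable def RandAlg.certProb {ι α β γ : Type} (A : RandAlg ι α γ)
    (f : PFn ι α β) (x : ι → α) : ℝ :=
  letI := A.fin
  ∑ ω, if IsCert f ((A.tree ω).queries x) x then A.p ω else 0


section Aux1
open Finset

variable {ι α β γ : Type}

lemma DTree.elim_empty [Inhabited α] (h : β → False) : DTree ι α β → False
  | .leaf b => h b
  | .node _ next => DTree.elim_empty h (next default)

lemma RandAlg.expCost_nonneg (A : RandAlg ι α β) (x : ι → α) : 0 ≤ A.expCost x := by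
  letI := A.fin
  exact Finset.sum_nonneg fun ω _ => mul_nonneg (A.nonneg ω) (Nat.cast_nonneg _)

/-- In a zero-error algorithm, every tree with nonzero probability is correct. -/
lemma RandAlg.correct_of_ne_zero {f : PFn ι α β} (A : RandAlg ι α β)
    (hA : A.Computes f 0) {x : ι → α} {b : β} (hx : f x = some b)
    {ω : A.Ω} (hω : A.p ω ≠ 0) : (A.tree ω).output x = b := by
  classical
  letI := A.fin
  have h1 : (1 : ℝ) ≤ A.succProb x b := by simpa using hA x b hx
  have hle : ∀ ω' ∈ Finset.univ (α := A.Ω),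
      (if (A.tree ω').output x = b then A.p ω' else 0) ≤ A.p ω' := by
    intro ω' _
    split
    · exact le_rfl
    · exact A.nonneg ω'
  have h2 : A.succProb x b ≤ 1 := by
    rw [show (1:ℝ) = ∑ ω', A.p ω' from A.sum_one.symm]
    unfold RandAlg.succProb
    exact Finset.sum_le_sum (by convert hle using 2)
  have heq : A.succProb x b = ∑ ω', A.p ω' := by
    rw [A.sum_one]; linarith
  unfold RandAlg.succProb at heq
  have := (Finset.sum_eq_sum_iff_of_le hle).mp (by convert heq using 2) ω (Finset.mem_univ ω)
  by_contra hne
  rw [if_neg hne] at this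
  exact hω this.symm

/-- If every tree in the support satisfies `P x`, the success probability is 1. -/
lemma RandAlg.succProb_eq_one {b : β} (A : RandAlg ι α β) {x : ι → α}
    (h : ∀ ω, A.p ω ≠ 0 → (A.tree ω).output x = b) : A.succProb x b = 1 := by
  classical
  letI := A.fin
  unfold RandAlg.succProb
  rw [← A.sum_one]
  refine Finset.sum_congr rfl fun ω _ => ?_
  by_cases hω : A.p ω = 0
  · split <;> simp [hω]
  · rw [if_pos (h ω hω)]

end Aux1
section Aux2
open Finset

variable {ι α β : Type} [DecidableEq ι]

/-- Patch `x₀` with the values of `x` on the list `l`. -/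
def patchL (x₀ : ι → α) : List ι → (ι → α) → (ι → α)
  | [], _ => x₀
  | i :: l, x => Function.update (patchL x₀ l x) i (x i)

/-- A tree querying all positions in `l` and outputting `g` of the patched input. -/
def allT (x₀ : ι → α) : ((ι → α) → β) → List ι → DTree ι α β
  | g, [] => .leaf (g x₀)
  | g, i :: l => .node i fun a => allT x₀ (fun y => g (Function.update y i a)) l

lemma allT_output (x₀ : ι → α) (g : (ι → α) → β) (l : List ι) (x : ι → α) :
    (allT x₀ g l).output x = g (patchL x₀ l x) := by
  induction l generalizing g with
  | nil => rfl
  | cons i l ih => simp [allT, DTree.output, patchL, ih]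

lemma allT_cost (x₀ : ι → α) (g : (ι → α) → β) (l : List ι) (x : ι → α) :
    (allT x₀ g l).cost x = l.length := by
  induction l generalizing g with
  | nil => rfl
  | cons i l ih => simp [allT, DTree.cost, ih]

lemma patchL_eq (x₀ x : ι → α) (l : List ι) (h : ∀ j, j ∈ l) : patchL x₀ l x = x := by
  funext j
  have hj := h j
  clear h
  induction l with
  | nil => simp at hj
  | cons i l ih =>
    by_cases hji : j = i
    · subst hji; simp [patchL]
    · simp at hj
      rcases hj with hj | hj
      · exact absurd hj hji
      · simp [patchL, Function.update_of_ne hji, ih hj]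

/-- There is always a zero-error algorithm (query everything). -/
lemma exists_zero_alg [Fintype ι] [Inhabited α] (f : PFn ι α β) (b₀ : β) :
    ∃ A : RandAlg ι α β, A.Computes f 0 ∧ ∀ x, A.expCost x ≤ (Fintype.card ι : ℝ) := by
  classical
  set g : (ι → α) → β := fun x => (f x).getD b₀ with hg
  set t : DTree ι α β := allT (fun _ => default) g Finset.univ.toList with ht
  have hout : ∀ x b, f x = some b → t.output x = b := by
    intro x b hx
    rw [ht, allT_output, patchL_eq _ _ _ (fun j => by simp), hg]
    simp [hx]
  refine ⟨⟨Unit, fun _ => 1, fun _ => zero_le_one, by simp, fun _ => t⟩, ?_, ?_⟩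
  · intro x b hx
    have : RandAlg.succProb ⟨Unit, fun _ => 1, fun _ => zero_le_one, by simp, fun _ => t⟩ x b = 1 :=
      RandAlg.succProb_eq_one _ fun ω _ => hout x b hx
    rw [this]; norm_num
  · intro x
    simp only [RandAlg.expCost]
    simp [ht, allT_cost]

lemma computes_mono {f : PFn ι α β} {A : RandAlg ι α β} {ε ε' : ℝ} (h : A.Computes f ε)
    (hεε' : ε ≤ ε') : A.Computes f ε' := fun x b hx => le_trans (by linarith) (h x b hx)

/-- The defining set for `Rbar` is nonempty when `β` is inhabited. -/
lemma rbarSet_nonempty [Fintype ι] [Inhabited α] (f : PFn ι α β) (b₀ : β) {ε : ℝ} (hε : 0 ≤ ε) :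
    ∃ T : ℝ, 0 ≤ T ∧ ∃ A : RandAlg ι α β, A.Computes f ε ∧ A.ECostLe f T := by
  obtain ⟨A, hA, hc⟩ := exists_zero_alg f b₀
  exact ⟨_, Nat.cast_nonneg _, A, computes_mono hA hε, fun x _ => hc x⟩

lemma rbar_nonneg {f : PFn ι α β} (ε : ℝ) : 0 ≤ Rbar ε f := by
  apply Real.sInf_nonneg
  rintro T ⟨hT, -⟩
  exact hT

lemma rbarSet_bddBelow (f : PFn ι α β) (ε : ℝ) :
    BddBelow {T : ℝ | 0 ≤ T ∧ ∃ A : RandAlg ι α β, A.Computes f ε ∧ A.ECostLe f T} :=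
  ⟨0, fun T hT => hT.1⟩

end Aux2
section Upper
open Finset

variable {ι α β γ : Type} {m : ℕ}

/-- Embed a single-instance tree into the direct-sum index set, with continuation `k`. -/
def embedT (i : Fin m) : DTree ι α β → (β → DTree (Fin m × ι) α γ) → DTree (Fin m × ι) α γ
  | .leaf b, k => k b
  | .node j next, k => .node (i, j) fun a => embedT i (next a) k

lemma embedT_output (i : Fin m) (t : DTree ι α β) (k : β → DTree (Fin m × ι) α γ)
    (z : Fin m × ι → α) :
    (embedT i t k).output z = (k (t.output fun j => z (i, j))).output z := by
  induction t with
  | leaf b => rfl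
  | node j next ih => simp [embedT, DTree.output, ih]

lemma embedT_cost (i : Fin m) (t : DTree ι α β) (k : β → DTree (Fin m × ι) α γ)
    (z : Fin m × ι → α) :
    (embedT i t k).cost z
      = t.cost (fun j => z (i, j)) + (k (t.output fun j => z (i, j))).cost z := by
  induction t with
  | leaf b => simp [embedT, DTree.cost, DTree.output]
  | node j next ih => simp [embedT, DTree.cost, DTree.output, ih]; ring

/-- Run the trees `ts i` for all `i` in the list `l`, in sequence. -/
def mergeT (ts : Fin m → DTree ι α β) :
    List (Fin m) → (Fin m → β) → DTree (Fin m × ι) α (Fin m → β)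
  | [], acc => .leaf acc
  | i :: l, acc => embedT i (ts i) fun b => mergeT ts l (Function.update acc i b)

lemma mergeT_output (ts : Fin m → DTree ι α β) (l : List (Fin m)) (acc : Fin m → β)
    (z : Fin m × ι → α) :
    (mergeT ts l acc).output z
      = fun i => if i ∈ l then (ts i).output (fun j => z (i, j)) else acc i := by
  induction l generalizing acc with
  | nil => simp [mergeT, DTree.output]
  | cons i l ih =>
    simp only [mergeT, embedT_output, ih]
    funext i'
    by_cases h1 : i' ∈ l
    · simp [h1]
    · by_cases h2 : i' = i
      · subst h2; simp [h1]
      · simp [h1, h2, Function.update_of_ne h2]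

lemma mergeT_cost (ts : Fin m → DTree ι α β) (l : List (Fin m)) (acc : Fin m → β)
    (z : Fin m × ι → α) :
    (mergeT ts l acc).cost z = (l.map fun i => (ts i).cost fun j => z (i, j)).sum := by
  induction l generalizing acc with
  | nil => simp [mergeT, DTree.cost]
  | cons i l ih => simp [mergeT, embedT_cost, ih]

lemma dsum_isSome_iff {n : ℕ} {f : PFn (Fin n) Bool β} {z : Fin m × Fin n → Bool} :
    (dsum m f z).isSome ↔ ∀ i, (f fun j => z (i, j)).isSome := by
  constructor
  · intro hz
    unfold dsum at hz
    split at hz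
    · assumption
    · simp at hz
  · intro h
    unfold dsum
    rw [dif_pos h]
    rfl

lemma dsum_eq_some {n : ℕ} {f : PFn (Fin n) Bool β} {z : Fin m × Fin n → Bool}
    {g : Fin m → β} (hz : dsum m f z = some g) :
    ∀ i, f (fun j => z (i, j)) = some (g i) := by
  intro i
  unfold dsum at hz
  split at hz
  · rename_i h
    obtain rfl : _ = g := Option.some_injective _ hz
    exact (Option.some_get (h i)).symm
  · exact absurd hz (by simp)

/-- The product algorithm: upper bound for the direct sum. -/
lemma dsum_upper {n : ℕ} (f : PFn (Fin n) Bool β) (b₀ : β)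
    {T : ℝ} {A : RandAlg (Fin n) Bool β} (hA : A.Computes f 0) (hE : A.ECostLe f T) :
    ∃ B : RandAlg (Fin m × Fin n) Bool (Fin m → β),
      B.Computes (dsum m f) 0 ∧ B.ECostLe (dsum m f) (m * T) := by
  classical
  letI := A.fin
  have hsum1 : ∑ v : Fin m → A.Ω, ∏ i, A.p (v i) = 1 := by
    rw [show (Finset.univ : Finset (Fin m → A.Ω)) = Fintype.piFinset (fun _ => Finset.univ)
      from (Fintype.piFinset_univ).symm,
      ← Finset.prod_univ_sum (fun _ : Fin m => (Finset.univ : Finset A.Ω)) (fun _ ω => A.p ω)]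
    simp [A.sum_one]
  refine ⟨⟨Fin m → A.Ω, fun v => ∏ i, A.p (v i),
      fun v => Finset.prod_nonneg fun i _ => A.nonneg (v i),
      hsum1, fun v => mergeT (fun i => A.tree (v i)) (List.finRange m) (fun _ => b₀)⟩, ?_, ?_⟩
  · intro z g hz
    have hout : ∀ v : Fin m → A.Ω, (∏ i, A.p (v i)) ≠ 0 →
        (mergeT (fun i => A.tree (v i)) (List.finRange m) (fun _ => b₀)).output z = g := by
      intro v hv
      rw [mergeT_output]
      funext i
      rw [if_pos (List.mem_finRange i)]
      exact A.correct_of_ne_zero hA (dsum_eq_some hz i)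
        (by simpa using Finset.prod_ne_zero_iff.mp hv i (Finset.mem_univ i))
    rw [RandAlg.succProb_eq_one (b := g)
      (A := ⟨Fin m → A.Ω, fun v => ∏ i, A.p (v i),
        fun v => Finset.prod_nonneg fun i _ => A.nonneg (v i), hsum1,
        fun v => mergeT (fun i => A.tree (v i)) (List.finRange m) (fun _ => b₀)⟩) hout]
    norm_num
  · intro z hz
    have hsome := dsum_isSome_iff.mp hz
    set x : Fin m → (Fin n → Bool) := fun i j => z (i, j) with hx
    have hcost : ∀ v : Fin m → A.Ω,
        (mergeT (fun i => A.tree (v i)) (List.finRange m) (fun _ => b₀)).cost z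
          = ∑ i, (A.tree (v i)).cost (x i) := by
      intro v; rw [mergeT_cost, ← Fin.sum_univ_def]
    have key : ∀ i : Fin m,
        (∑ v : Fin m → A.Ω, (∏ j, A.p (v j)) * ((A.tree (v i)).cost (x i) : ℝ))
          = A.expCost (x i) := by
      intro i
      have h1 : ∀ v : Fin m → A.Ω, (∏ j, A.p (v j)) * ((A.tree (v i)).cost (x i) : ℝ)
          = ∏ j, (if j = i then A.p (v j) * ((A.tree (v j)).cost (x i) : ℝ) else A.p (v j)) := by
        intro v
        rw [← Finset.mul_prod_erase Finset.univ _ (Finset.mem_univ i),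
            ← Finset.mul_prod_erase Finset.univ
              (fun j => if j = i then A.p (v j) * ((A.tree (v j)).cost (x i) : ℝ) else A.p (v j))
              (Finset.mem_univ i), if_pos rfl]
        rw [Finset.prod_congr rfl (fun j hj => if_neg (Finset.mem_erase.mp hj).1)]
        ring
      rw [Finset.sum_congr rfl fun v _ => h1 v]
      rw [show (Finset.univ : Finset (Fin m → A.Ω)) = Fintype.piFinset (fun _ => Finset.univ)
        from (Fintype.piFinset_univ).symm,
        ← Finset.prod_univ_sum (fun _ : Fin m => (Finset.univ : Finset A.Ω))
          (fun j ω => if j = i then A.p ω * ((A.tree ω).cost (x i) : ℝ) else A.p ω)]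
      rw [← Finset.mul_prod_erase Finset.univ _ (Finset.mem_univ i)]
      have h2 : ∀ j ∈ Finset.univ.erase i,
          (∑ ω, if j = i then A.p ω * ((A.tree ω).cost (x i) : ℝ) else A.p ω) = 1 := by
        intro j hj
        rw [Finset.sum_congr rfl fun ω _ => if_neg (Finset.mem_erase.mp hj).1, A.sum_one]
      rw [Finset.prod_congr rfl h2, Finset.prod_const_one, mul_one]
      simp [RandAlg.expCost]
    unfold RandAlg.expCost
    simp only [hcost]
    push_cast
    have : (∑ v : Fin m → A.Ω, (∏ j, A.p (v j)) * ∑ i, ((A.tree (v i)).cost (x i) : ℝ))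
        = ∑ i, ∑ v : Fin m → A.Ω, (∏ j, A.p (v j)) * ((A.tree (v i)).cost (x i) : ℝ) := by
      rw [Finset.sum_comm]
      exact Finset.sum_congr rfl fun v _ => Finset.mul_sum _ _ _
    rw [this, Finset.sum_congr rfl fun i _ => key i]
    calc (∑ i : Fin m, A.expCost (x i)) ≤ ∑ _i : Fin m, T :=
        Finset.sum_le_sum fun i _ => hE (x i) (hsome i)
      _ = m * T := by simp [mul_comm]

end Upper
section Lower
open Finset

variable {β γ δ : Type} {m n : ℕ}

/-- Number of queries of `t` on `z` whose first coordinate is `i`. -/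
def costAt (i : Fin m) : DTree (Fin m × Fin n) Bool γ → (Fin m × Fin n → Bool) → ℕ
  | .leaf _, _ => 0
  | .node q next, z => costAt i (next (z q)) z + (if q.1 = i then 1 else 0)

lemma sum_costAt (t : DTree (Fin m × Fin n) Bool γ) (z : Fin m × Fin n → Bool) :
    ∑ i, costAt i t z = t.cost z := by
  induction t with
  | leaf b => simp [costAt, DTree.cost]
  | node q next ih =>
    simp only [costAt, DTree.cost, Finset.sum_add_distrib, ih]
    congr 1
    simp [Finset.sum_ite_eq]

/-- Restriction of a direct-sum tree to instance `i`, with the other instances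
answered internally according to `y`, and output projected by `proj`. -/
def restrictT (i : Fin m) (y : Fin m → Fin n → Bool) (proj : γ → δ) :
    DTree (Fin m × Fin n) Bool γ → DTree (Fin n) Bool δ
  | .leaf b => .leaf (proj b)
  | .node q next =>
    if q.1 = i then .node q.2 fun a => restrictT i y proj (next a)
    else restrictT i y proj (next (y q.1 q.2))

/-- The combined input: instance `i` is `x`, the others come from `y`. -/
def combZ (i : Fin m) (y : Fin m → Fin n → Bool) (x : Fin n → Bool) : Fin m × Fin n → Bool :=
  fun q => if q.1 = i then x q.2 else y q.1 q.2

lemma restrictT_output (i : Fin m) (y : Fin m → Fin n → Bool) (proj : γ → δ) (x : Fin n → Bool)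
    (t : DTree (Fin m × Fin n) Bool γ) :
    (restrictT i y proj t).output x = proj (t.output (combZ i y x)) := by
  induction t with
  | leaf b => rfl
  | node q next ih =>
    by_cases h : q.1 = i
    · simp [restrictT, h, DTree.output, ih, combZ]
    · simp [restrictT, h, DTree.output, ih, combZ]

lemma restrictT_cost (i : Fin m) (y : Fin m → Fin n → Bool) (proj : γ → δ) (x : Fin n → Bool)
    (t : DTree (Fin m × Fin n) Bool γ) :
    (restrictT i y proj t).cost x = costAt i t (combZ i y x) := by
  induction t with
  | leaf b => rfl
  | node q next ih =>
    by_cases h : q.1 = i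
    · simp [restrictT, h, DTree.cost, costAt, ih, combZ]
    · simp [restrictT, h, DTree.cost, costAt, ih, combZ]

lemma combZ_update (i : Fin m) (y : Fin m → Fin n → Bool) (x : Fin n → Bool) :
    combZ i y x = fun q => (Function.update y i x) q.1 q.2 := by
  funext q
  by_cases h : q.1 = i
  · simp [combZ, h]
  · simp [combZ, h, Function.update_of_ne h]

lemma FinDist.sum_univ {V : Type} [Fintype V] [DecidableEq V] (μ : FinDist V) :
    ∑ s : V, μ.p s = 1 := by
  rw [← μ.sum_one]
  exact (Finset.sum_subset (Finset.subset_univ _) fun s _ hs => μ.zero_off s hs).symm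

/-- The weight function for the marginal algorithm at instance `i`. -/
noncomputable def Wgt (μ : FinDist (Fin n → Bool)) (i : Fin m) (j : Fin m)
    (s : Fin n → Bool) : ℝ :=
  if j = i then (if s = (fun _ => false) then 1 else 0) else μ.p s

lemma Wgt_nonneg (μ : FinDist (Fin n → Bool)) (i j : Fin m) (s : Fin n → Bool) :
    0 ≤ Wgt μ i j s := by
  unfold Wgt
  split
  · split <;> norm_num
  · exact μ.nonneg s

lemma Wgt_sum (μ : FinDist (Fin n → Bool)) (i j : Fin m) : ∑ s : Fin n → Bool, Wgt μ i j s = 1 := by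
  unfold Wgt
  by_cases h : j = i
  · simp [h]
  · simp only [if_neg h]
    exact FinDist.sum_univ μ

lemma Wgt_prod_eq (μ : FinDist (Fin n → Bool)) (i : Fin m) (y : Fin m → Fin n → Bool) :
    ∏ j, Wgt μ i j (y j)
      = (if y i = (fun _ => false) then 1 else 0) * ∏ j ∈ Finset.univ.erase i, μ.p (y j) := by
  rw [← Finset.mul_prod_erase Finset.univ _ (Finset.mem_univ i)]
  congr 1
  · simp [Wgt]
  · exact Finset.prod_congr rfl fun j hj => by simp [Wgt, (Finset.mem_erase.mp hj).1]

lemma sum_Wgt_prod (μ : FinDist (Fin n → Bool)) (i : Fin m) :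
    ∑ y : Fin m → Fin n → Bool, ∏ j, Wgt μ i j (y j) = 1 := by
  rw [show (Finset.univ : Finset (Fin m → Fin n → Bool))
      = Fintype.piFinset (fun _ => Finset.univ) from (Fintype.piFinset_univ).symm,
    ← Finset.prod_univ_sum (fun _ : Fin m => (Finset.univ : Finset (Fin n → Bool)))
      (fun j s => Wgt μ i j s)]
  simp [Wgt_sum]

/-- The involution matching `(x, y)` with `(y i, update y i x)`. -/
def swapI (i : Fin m) :
    (Fin n → Bool) × (Fin m → Fin n → Bool) ≃ (Fin n → Bool) × (Fin m → Fin n → Bool) :=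
  Function.Involutive.toPerm (fun p => (p.2 i, Function.update p.2 i p.1)) (by
    intro p
    simp)

/-- Key marginalization identity. -/
lemma marg_exp (μ : FinDist (Fin n → Bool)) (i : Fin m) (C : (Fin m × Fin n → Bool) → ℝ) :
    ∑ x ∈ μ.support, μ.p x * ∑ y : Fin m → Fin n → Bool,
        (∏ j, Wgt μ i j (y j)) * C (combZ i y x)
      = ∑ t ∈ Fintype.piFinset (fun _ : Fin m => μ.support),
          (∏ j, μ.p (t j)) * C (fun q => t q.1 q.2) := by
  classical
  rw [Finset.sum_subset (Finset.subset_univ μ.support)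
    (fun x _ hx => by rw [μ.zero_off x hx, zero_mul])]
  rw [Finset.sum_subset (Finset.subset_univ (Fintype.piFinset (fun _ : Fin m => μ.support)))
    (fun t _ ht => by
      obtain ⟨j, hj⟩ : ∃ j, t j ∉ μ.support := by
        by_contra hc
        push_neg at hc
        exact ht (Fintype.mem_piFinset.mpr hc)
      rw [Finset.prod_eq_zero (Finset.mem_univ j) (μ.zero_off _ hj), zero_mul])]
  -- both sides as sums over the product type
  have lhs_eq : ∑ x : Fin n → Bool, μ.p x * ∑ y : Fin m → Fin n → Bool,
        (∏ j, Wgt μ i j (y j)) * C (combZ i y x)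
      = ∑ p : (Fin n → Bool) × (Fin m → Fin n → Bool),
          μ.p p.1 * ((∏ j, Wgt μ i j (p.2 j)) * C (combZ i p.2 p.1)) := by
    rw [Fintype.sum_prod_type]
    exact Finset.sum_congr rfl fun x _ => Finset.mul_sum _ _ _
  have rhs_eq : ∑ p : (Fin n → Bool) × (Fin m → Fin n → Bool),
          (if p.1 = (fun _ => false) then (1:ℝ) else 0)
            * ((∏ j, μ.p (p.2 j)) * C (fun q => p.2 q.1 q.2))
      = ∑ t : Fin m → Fin n → Bool, (∏ j, μ.p (t j)) * C (fun q => t q.1 q.2) := by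
    rw [Fintype.sum_prod_type]
    trans ∑ x : Fin n → Bool, (if x = (fun _ => false) then (1:ℝ) else 0)
        * ∑ y : Fin m → Fin n → Bool, (∏ j, μ.p (y j)) * C (fun q => y q.1 q.2)
    · exact Finset.sum_congr rfl fun x _ =>
        (Finset.mul_sum Finset.univ
          (fun y : Fin m → Fin n → Bool => (∏ j, μ.p (y j)) * C (fun q => y q.1 q.2))
          (if x = (fun _ => false) then (1:ℝ) else 0)).symm
    · rw [← Finset.sum_mul, Finset.sum_ite_eq' Finset.univ (fun _ : Fin n => false)
        (fun _ => (1:ℝ))]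
      simp
  rw [lhs_eq, ← rhs_eq]
  apply Fintype.sum_equiv (swapI i)
  rintro ⟨x, y⟩
  show μ.p x * ((∏ j, Wgt μ i j (y j)) * C (combZ i y x))
    = (if y i = (fun _ => false) then (1:ℝ) else 0)
        * ((∏ j, μ.p (Function.update y i x j)) * C (fun q => Function.update y i x q.1 q.2))
  rw [Wgt_prod_eq, combZ_update]
  rw [← Finset.mul_prod_erase Finset.univ (fun j => μ.p (Function.update y i x j))
    (Finset.mem_univ i)]
  rw [Function.update_self]
  rw [Finset.prod_congr rfl fun j hj =>
    congrArg μ.p (Function.update_of_ne (Finset.mem_erase.mp hj).1 x y)]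
  ring

end Lower
section Marg
open Finset

variable {β γ : Type} {m n : ℕ}

/-- The marginal algorithm for instance `i`: other instances are sampled from `μ`
(internally), and the output is projected by `proj`. -/
noncomputable def margAlg (A : RandAlg (Fin m × Fin n) Bool γ) (μ : FinDist (Fin n → Bool))
    (i : Fin m) (proj : γ → β) : RandAlg (Fin n) Bool β where
  Ω := A.Ω × (Fin m → Fin n → Bool)
  fin := letI := A.fin; inferInstance
  p := fun ω => A.p ω.1 * ∏ j, Wgt μ i j (ω.2 j)
  nonneg := fun ω => mul_nonneg (A.nonneg ω.1) (Finset.prod_nonneg fun j _ => Wgt_nonneg μ i j _)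
  sum_one := by
    letI := A.fin
    rw [Fintype.sum_prod_type]
    trans ∑ ω : A.Ω, A.p ω * ∑ y : Fin m → Fin n → Bool, ∏ j, Wgt μ i j (y j)
    · exact Finset.sum_congr rfl fun ω _ =>
        (Finset.mul_sum Finset.univ (fun y : Fin m → Fin n → Bool => ∏ j, Wgt μ i j (y j))
          (A.p ω)).symm
    · simp only [sum_Wgt_prod, mul_one, A.sum_one]
  tree := fun ω => restrictT i ω.2 proj (A.tree ω.1)

lemma margAlg_expCost (A : RandAlg (Fin m × Fin n) Bool γ) (μ : FinDist (Fin n → Bool))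
    (i : Fin m) (proj : γ → β) (x : Fin n → Bool) :
    (margAlg A μ i proj).expCost x
      = letI := A.fin
        ∑ y : Fin m → Fin n → Bool, (∏ j, Wgt μ i j (y j))
          * ∑ ω : A.Ω, A.p ω * (costAt i (A.tree ω) (combZ i y x) : ℝ) := by
  letI := A.fin
  show ∑ ω : A.Ω × (Fin m → Fin n → Bool), _ = _
  rw [Fintype.sum_prod_type]
  rw [Finset.sum_comm]
  refine Finset.sum_congr rfl fun y _ => ?_
  rw [Finset.mul_sum]
  refine Finset.sum_congr rfl fun ω _ => ?_
  show (A.p ω * ∏ j, Wgt μ i j (y j)) * ((restrictT i y proj (A.tree ω)).cost x : ℝ) = _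
  rw [restrictT_cost]
  ring

lemma margAlg_marg (A : RandAlg (Fin m × Fin n) Bool γ) (μ : FinDist (Fin n → Bool))
    (i : Fin m) (proj : γ → β) :
    ∑ x ∈ μ.support, μ.p x * (margAlg A μ i proj).expCost x
      = letI := A.fin
        ∑ t ∈ Fintype.piFinset (fun _ : Fin m => μ.support),
          (∏ j, μ.p (t j)) * ∑ ω : A.Ω, A.p ω * (costAt i (A.tree ω) (fun q => t q.1 q.2) : ℝ) := by
  letI := A.fin
  trans ∑ x ∈ μ.support, μ.p x * ∑ y : Fin m → Fin n → Bool, (∏ j, Wgt μ i j (y j))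
      * ∑ ω : A.Ω, A.p ω * (costAt i (A.tree ω) (combZ i y x) : ℝ)
  · exact Finset.sum_congr rfl fun x _ => by rw [margAlg_expCost]
  · exact marg_exp μ i (fun z => ∑ ω : A.Ω, A.p ω * (costAt i (A.tree ω) z : ℝ))

lemma margAlg_total (A : RandAlg (Fin m × Fin n) Bool γ) (μ : FinDist (Fin n → Bool))
    (proj : Fin m → γ → β) :
    ∑ i, ∑ x ∈ μ.support, μ.p x * (margAlg A μ i (proj i)).expCost x
      = ∑ t ∈ Fintype.piFinset (fun _ : Fin m => μ.support),
          (∏ j, μ.p (t j)) * A.expCost (fun q => t q.1 q.2) := by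
  letI := A.fin
  rw [Finset.sum_congr rfl fun i _ => margAlg_marg A μ i (proj i)]
  rw [Finset.sum_comm]
  refine Finset.sum_congr rfl fun t _ => ?_
  rw [← Finset.mul_sum]
  congr 1
  rw [Finset.sum_comm]
  unfold RandAlg.expCost
  refine Finset.sum_congr rfl fun ω _ => ?_
  rw [← Finset.mul_sum]
  congr 1
  rw [← Nat.cast_sum]
  rw [sum_costAt]

lemma combZ_at_self (i : Fin m) (y : Fin m → Fin n → Bool) (x : Fin n → Bool) :
    (fun j => combZ i y x (i, j)) = x := by
  funext j; simp [combZ]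

lemma combZ_at_other {i i' : Fin m} (h : i' ≠ i) (y : Fin m → Fin n → Bool) (x : Fin n → Bool) :
    (fun j => combZ i y x (i', j)) = y i' := by
  funext j; simp [combZ, h]

lemma margAlg_computes {f : PFn (Fin n) Bool β} (A : RandAlg (Fin m × Fin n) Bool (Fin m → β))
    (μ : FinDist (Fin n → Bool)) (hsupp : ∀ x ∈ μ.support, (f x).isSome)
    {ε : ℝ} (hA : A.Computes (dsum m f) ε) (i : Fin m) :
    (margAlg A μ i (fun g => g i)).Computes f ε := by
  classical
  letI := A.fin
  intro x b hx
  unfold RandAlg.succProb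
  show 1 - ε ≤ ∑ ω : A.Ω × (Fin m → Fin n → Bool), _
  rw [Fintype.sum_prod_type, Finset.sum_comm]
  have key : ∀ y : Fin m → Fin n → Bool,
      (∏ j, Wgt μ i j (y j)) * (1 - ε)
        ≤ ∑ ω : A.Ω, if (restrictT i y (fun g : Fin m → β => g i) (A.tree ω)).output x = b
            then A.p ω * ∏ j, Wgt μ i j (y j) else 0 := by
    intro y
    have h1 : ∑ ω : A.Ω, (if (restrictT i y (fun g : Fin m → β => g i) (A.tree ω)).output x = b
            then A.p ω * ∏ j, Wgt μ i j (y j) else 0)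
        = (∏ j, Wgt μ i j (y j)) * ∑ ω : A.Ω,
            (if (restrictT i y (fun g : Fin m → β => g i) (A.tree ω)).output x = b
              then A.p ω else 0) := by
      rw [Finset.mul_sum]
      refine Finset.sum_congr rfl fun ω _ => ?_
      split <;> ring
    rw [h1]
    by_cases hW : (∏ j, Wgt μ i j (y j)) = 0
    · simp [hW]
    · have hWpos : 0 < ∏ j, Wgt μ i j (y j) :=
        lt_of_le_of_ne (Finset.prod_nonneg fun j _ => Wgt_nonneg μ i j _) (Ne.symm hW)
      refine mul_le_mul_of_nonneg_left ?_ (le_of_lt hWpos)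
      -- the combined input is in the domain
      have hyj : ∀ j, j ≠ i → (f (y j)).isSome := by
        intro j hj
        apply hsupp
        by_contra hmem
        exact (Finset.prod_ne_zero_iff.mp hW j (Finset.mem_univ j))
          (by simp [Wgt, hj, μ.zero_off _ hmem])
      have hZ : (dsum m f (combZ i y x)).isSome := by
        rw [dsum_isSome_iff]
        intro i'
        by_cases h : i' = i
        · subst h; rw [combZ_at_self, hx]; rfl
        · rw [combZ_at_other h]; exact hyj i' h
      obtain ⟨g, hg⟩ := Option.isSome_iff_exists.mp hZ
      have hgi : g i = b := by
        have := dsum_eq_some hg i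
        rw [combZ_at_self, hx] at this
        exact (Option.some_inj.mp this).symm
      calc 1 - ε ≤ A.succProb (combZ i y x) g := hA _ g hg
        _ ≤ ∑ ω : A.Ω, (if (restrictT i y (fun g : Fin m → β => g i) (A.tree ω)).output x = b
              then A.p ω else 0) := by
            unfold RandAlg.succProb
            refine Finset.sum_le_sum fun ω _ => ?_
            split
            · rename_i hout
              rw [if_pos]
              rw [restrictT_output, hout, hgi]
            · split
              · exact A.nonneg ω
              · exact le_rfl
  calc 1 - ε = ∑ y : Fin m → Fin n → Bool, (∏ j, Wgt μ i j (y j)) * (1 - ε) := by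
        rw [← Finset.sum_mul, sum_Wgt_prod, one_mul]
    _ ≤ _ := Finset.sum_le_sum fun y _ => key y

end Marg
section Mix
open Finset

variable {ι α β : Type}

/-- Mixture of two randomized algorithms. -/
noncomputable def mixAlg (A B : RandAlg ι α β) (a b : ℝ) (ha : 0 ≤ a) (hb : 0 ≤ b)
    (hab : a + b = 1) : RandAlg ι α β where
  Ω := A.Ω ⊕ B.Ω
  fin := letI := A.fin; letI := B.fin; inferInstance
  p := Sum.elim (fun ω => a * A.p ω) (fun ω => b * B.p ω)
  nonneg := by
    rintro (ω | ω)
    · exact mul_nonneg ha (A.nonneg ω)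
    · exact mul_nonneg hb (B.nonneg ω)
  sum_one := by
    letI := A.fin; letI := B.fin
    rw [Fintype.sum_sum_type]
    simp only [Sum.elim_inl, Sum.elim_inr, ← Finset.mul_sum, A.sum_one, B.sum_one, mul_one]
    exact hab
  tree := Sum.elim A.tree B.tree

lemma mixAlg_succProb (A B : RandAlg ι α β) (a b : ℝ) (ha : 0 ≤ a) (hb : 0 ≤ b)
    (hab : a + b = 1) (x : ι → α) (b' : β) :
    (mixAlg A B a b ha hb hab).succProb x b' = a * A.succProb x b' + b * B.succProb x b' := by
  classical
  letI := A.fin; letI := B.fin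
  unfold RandAlg.succProb mixAlg
  show ∑ ω : A.Ω ⊕ B.Ω, _ = _
  rw [Fintype.sum_sum_type]
  congr 1
  · rw [Finset.mul_sum]
    exact Finset.sum_congr rfl fun ω _ => by
        show (if (A.tree ω).output x = b' then a * A.p ω else 0) = a * (if (A.tree ω).output x = b' then A.p ω else 0)
        split_ifs <;> simp
  · rw [Finset.mul_sum]
    exact Finset.sum_congr rfl fun ω _ => by
        show (if (B.tree ω).output x = b' then b * B.p ω else 0) = b * (if (B.tree ω).output x = b' then B.p ω else 0)
        split_ifs <;> simp

lemma mixAlg_expCost (A B : RandAlg ι α β) (a b : ℝ) (ha : 0 ≤ a) (hb : 0 ≤ b)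
    (hab : a + b = 1) (x : ι → α) :
    (mixAlg A B a b ha hb hab).expCost x = a * A.expCost x + b * B.expCost x := by
  letI := A.fin; letI := B.fin
  unfold RandAlg.expCost mixAlg
  show ∑ ω : A.Ω ⊕ B.Ω, _ = _
  rw [Fintype.sum_sum_type]
  congr 1
  · rw [Finset.mul_sum]; exact Finset.sum_congr rfl fun ω _ => by simp [mul_assoc]
  · rw [Finset.mul_sum]; exact Finset.sum_congr rfl fun ω _ => by simp [mul_assoc]

end Mix
section Yao
open Finset

variable {n : ℕ} {β : Type}

/-- Yao-style minimax: a hard distribution for `R̄_ε(f)` exists. -/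
lemma yao (f : PFn (Fin n) Bool β) (b₀ : β) {ε : ℝ} (hε : 0 ≤ ε)
    (hdom : ∃ x, (f x).isSome) :
    ∃ μ : FinDist (Fin n → Bool), (∀ x ∈ μ.support, (f x).isSome) ∧
      ∀ A : RandAlg (Fin n) Bool β, A.Computes f ε →
        Rbar ε f ≤ ∑ x ∈ μ.support, μ.p x * A.expCost x := by
  classical
  set X := {x : Fin n → Bool // (f x).isSome} with hX
  haveI : Nonempty X := ⟨⟨hdom.choose, hdom.choose_spec⟩⟩
  set v : ℝ := Rbar ε f with hv
  set K : Set (X → ℝ) := {c | ∃ A : RandAlg (Fin n) Bool β, A.Computes f ε ∧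
    ∀ x : X, A.expCost x.1 ≤ c x} with hK
  set U : Set (X → ℝ) := {c | ∀ x : X, c x < v} with hU
  -- K is convex
  have hKco : Convex ℝ K := by
    rintro c ⟨A, hAc, hAe⟩ d ⟨B, hBc, hBe⟩ a b ha hb hab
    refine ⟨mixAlg A B a b ha hb hab, ?_, ?_⟩
    · intro x b' hx
      rw [mixAlg_succProb]
      have h1 := hAc x b' hx
      have h2 := hBc x b' hx
      nlinarith
    · intro x
      rw [mixAlg_expCost]
      calc a * A.expCost x.1 + b * B.expCost x.1 ≤ a * c x + b * d x :=
            add_le_add (mul_le_mul_of_nonneg_left (hAe x) ha)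
              (mul_le_mul_of_nonneg_left (hBe x) hb)
        _ = (a • c + b • d) x := by simp [smul_eq_mul]
  -- U is convex and open
  have hUeq : U = ⋂ x : X, {c : X → ℝ | c x < v} := by
    ext c; simp [hU, Set.mem_iInter]
  have hUco : Convex ℝ U := by
    rw [hUeq]
    exact convex_iInter fun x => convex_halfSpace_lt ⟨fun _ _ => rfl, fun _ _ => rfl⟩ v
  have hUopen : IsOpen U := by
    rw [hUeq]
    exact isOpen_iInter_of_finite fun x => isOpen_lt (continuous_apply x) continuous_const
  -- disjointness
  have hdisj : Disjoint U K := by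
    rw [Set.disjoint_left]
    rintro c hcU ⟨A, hAc, hAe⟩
    set T : ℝ := Finset.univ.sup' Finset.univ_nonempty c with hT
    have hTlt : T < v := by
      rw [hT, Finset.sup'_lt_iff]
      exact fun x _ => hcU x
    have hvT : v ≤ T := by
      apply csInf_le (rbarSet_bddBelow f ε)
      refine ⟨?_, A, hAc, fun x hx => ?_⟩
      · obtain ⟨x⟩ := (inferInstance : Nonempty X)
        exact le_trans (le_trans (A.expCost_nonneg x.1) (hAe x)) (Finset.le_sup' c (Finset.mem_univ x))
      · exact le_trans (hAe ⟨x, hx⟩) (Finset.le_sup' c (Finset.mem_univ (⟨x, hx⟩ : X)))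
    linarith
  obtain ⟨F, u, hFU, hFK⟩ := geometric_hahn_banach_open hUco hUopen hKco hdisj
  set lam : X → ℝ := fun x => F (Pi.single x 1) with hlam
  have hF : ∀ c : X → ℝ, F c = ∑ x : X, c x * lam x := by
    intro c
    have hc : c = ∑ x : X, c x • (Pi.single x 1 : X → ℝ) := by
      funext x'
      rw [Finset.sum_apply]
      have hterm : ∀ x : X, (c x • (Pi.single x 1 : X → ℝ)) x' = if x' = x then c x else 0 := by
        intro x
        rw [Pi.smul_apply, Pi.single_apply, smul_eq_mul]
        split <;> simp
      rw [Finset.sum_congr rfl fun x _ => hterm x]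
      rw [Finset.sum_eq_single x' (fun b _ hb => if_neg (Ne.symm hb)) (fun h => absurd (Finset.mem_univ x') h), if_pos rfl]
    conv_lhs => rw [hc]
    rw [map_sum]
    exact Finset.sum_congr rfl fun x _ => by rw [map_smul, smul_eq_mul]
  -- the functional is nonnegative
  have hlam_nonneg : ∀ x : X, 0 ≤ lam x := by
    intro x
    by_contra hneg
    push_neg at hneg
    set c0 : X → ℝ := fun _ => v - 1 with hc0
    set M : ℝ := max 0 ((u - F c0) / (-lam x)) with hM
    have hM0 : 0 ≤ M := le_max_left _ _
    have hcM : (c0 - M • (Pi.single x 1 : X → ℝ)) ∈ U := by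
      intro x'
      simp only [Pi.sub_apply, Pi.smul_apply, smul_eq_mul, hc0]
      have : 0 ≤ M * (Pi.single x (1:ℝ) : X → ℝ) x' := by
        apply mul_nonneg hM0
        rw [Pi.single_apply]
        split <;> norm_num
      linarith
    have hlt := hFU _ hcM
    rw [map_sub, map_smul, smul_eq_mul] at hlt
    have hMge : (u - F c0) / (-lam x) ≤ M := le_max_right _ _
    rw [div_le_iff₀ (by linarith : (0:ℝ) < -lam x)] at hMge
    have : u ≤ F c0 - M * lam x := by nlinarith
    linarith
  set S : ℝ := ∑ x : X, lam x with hS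
  have hS0 : 0 ≤ S := Finset.sum_nonneg fun x _ => hlam_nonneg x
  -- K is nonempty
  obtain ⟨A₀, hA₀c, hA₀e⟩ := exists_zero_alg f b₀
  have hcK : (fun x : X => A₀.expCost x.1) ∈ K :=
    ⟨A₀, computes_mono hA₀c hε, fun x => le_rfl⟩
  have huK := hFK _ hcK
  have hUconst : ∀ r : ℝ, r < v → F (fun _ : X => r) < u := fun r hr => hFU _ fun x => hr
  have hSpos : 0 < S := by
    rcases lt_or_eq_of_le hS0 with h | h
    · exact h
    · exfalso
      have hzero : ∀ x : X, lam x = 0 := by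
        intro x
        have := (Finset.sum_eq_zero_iff_of_nonneg fun x _ => hlam_nonneg x).mp h.symm
        exact this x (Finset.mem_univ x)
      have h1 : F (fun x : X => A₀.expCost x.1) = 0 := by
        rw [hF]; simp [hzero]
      have h2 : F (fun _ : X => v - 1) = 0 := by
        rw [hF]; simp [hzero]
      have := hUconst (v - 1) (by linarith)
      rw [h2] at this
      rw [h1] at huK
      linarith
  have hvS : v * S ≤ u := by
    by_contra hc
    push_neg at hc
    set δ : ℝ := (v * S - u) / S with hδ
    have hδpos : 0 < δ := div_pos (by linarith) hSpos
    have := hUconst (v - δ) (by linarith)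
    rw [hF] at this
    have heq : ∑ x : X, (v - δ) * lam x = (v - δ) * S := by
      rw [← Finset.mul_sum]
    rw [heq] at this
    have : v * S - δ * S < u := by nlinarith
    rw [hδ, div_mul_cancel₀ _ (ne_of_gt hSpos)] at this
    linarith
  -- build the distribution
  refine ⟨⟨Finset.univ.filter fun x => (f x).isSome,
    fun x => if h : (f x).isSome then lam ⟨x, h⟩ / S else 0,
    fun x => ?_, fun x hx => ?_, ?_⟩, fun x hx => ?_, ?_⟩
  · split
    · exact div_nonneg (hlam_nonneg _) hS0
    · exact le_rfl
  · rw [dif_neg]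
    simpa using hx
  · rw [Finset.sum_subtype (p := fun x => (f x).isSome = true)
      (Finset.univ.filter fun x => (f x).isSome)
      (fun x => by simp) (fun x => if h : (f x).isSome then lam ⟨x, h⟩ / S else 0)]
    rw [Finset.sum_congr rfl fun (x : X) _ => dif_pos x.2]
    rw [← Finset.sum_div, div_self (ne_of_gt hSpos)]
  · simpa using hx
  · intro A hA
    have hcA : (fun x : X => A.expCost x.1) ∈ K := ⟨A, hA, fun x => le_rfl⟩
    have h1 : u ≤ ∑ x : X, A.expCost x.1 * lam x := by
      have := hFK _ hcA
      rwa [hF] at this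
    have h2 : ∑ x ∈ Finset.univ.filter fun x => (f x).isSome,
        (if h : (f x).isSome then lam ⟨x, h⟩ / S else 0) * A.expCost x
        = (∑ x : X, A.expCost x.1 * lam x) / S := by
      rw [Finset.sum_subtype (p := fun x => (f x).isSome = true)
        (Finset.univ.filter fun x => (f x).isSome)
        (fun x => by simp)
        (fun x => (if h : (f x).isSome then lam ⟨x, h⟩ / S else 0) * A.expCost x)]
      rw [Finset.sum_div]
      refine Finset.sum_congr rfl fun (x : X) _ => ?_
      rw [dif_pos x.2]
      ring
    rw [h2]
    have hv' : v = v * S / S := by rw [mul_div_cancel_right₀ _ (ne_of_gt hSpos)]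
    calc v = v * S / S := hv'
      _ ≤ u / S := by gcongr
      _ ≤ (∑ x : X, A.expCost x.1 * lam x) / S := by gcongr

end Yao
section Assemble
open Finset

variable {n : ℕ} {β : Type}

lemma randAlg_elim {ι : Type} (hβ : ¬ Nonempty β) (A : RandAlg ι Bool β) : False := by
  letI := A.fin
  have hne : (Finset.univ : Finset A.Ω).Nonempty := by
    by_contra h
    rw [Finset.not_nonempty_iff_eq_empty] at h
    have h1 := A.sum_one
    rw [h] at h1
    simp at h1
  obtain ⟨ω, -⟩ := hne
  exact DTree.elim_empty (fun b => hβ ⟨b⟩) (A.tree ω)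

lemma rbar_eq_zero_of_no_alg {ι : Type} (f : PFn ι Bool β) (hβ : ¬ Nonempty β) (ε : ℝ) :
    Rbar ε f = 0 := by
  unfold Rbar
  have : {T : ℝ | 0 ≤ T ∧ ∃ A : RandAlg ι Bool β, A.Computes f ε ∧ A.ECostLe f T} = ∅ :=
    Set.eq_empty_iff_forall_notMem.mpr fun T hT => randAlg_elim hβ hT.2.choose
  rw [this, Real.sInf_empty]

lemma rbar_eq_zero_of_empty_dom {ι : Type} (f : PFn ι Bool β) (b₀ : β)
    (hdom : ∀ x, ¬ (f x).isSome) (ε : ℝ) : Rbar ε f = 0 := by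
  classical
  refine le_antisymm ?_ (rbar_nonneg ε)
  apply csInf_le (rbarSet_bddBelow f ε)
  exact ⟨le_rfl, ⟨Unit, fun _ => 1, fun _ => zero_le_one, by simp, fun _ => .leaf b₀⟩,
    fun x b hx => absurd (by rw [hx]; rfl) (hdom x), fun x hx => absurd hx (hdom x)⟩

lemma FinDist.support_nonempty {V : Type} (μ : FinDist V) : μ.support.Nonempty := by
  by_contra h
  rw [Finset.not_nonempty_iff_eq_empty] at h
  have := μ.sum_one
  rw [h] at this
  simp at this

/-- The key lower bound via the hard distribution. -/
lemma dsum_lower_core (f : PFn (Fin n) Bool β) {m : ℕ} (μ : FinDist (Fin n → Bool))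
    (hsupp : ∀ x ∈ μ.support, (f x).isSome) {ε r : ℝ}
    (hard : ∀ A' : RandAlg (Fin n) Bool β, A'.Computes f ε →
      r ≤ ∑ x ∈ μ.support, μ.p x * A'.expCost x)
    (A : RandAlg (Fin m × Fin n) Bool (Fin m → β)) (hA : A.Computes (dsum m f) ε) :
    (m : ℝ) * r ≤ ∑ t ∈ Fintype.piFinset (fun _ : Fin m => μ.support),
        (∏ i, μ.p (t i)) * A.expCost fun q => t q.1 q.2 := by
  calc (m : ℝ) * r = ∑ _i : Fin m, r := by simp [mul_comm]
    _ ≤ ∑ i, ∑ x ∈ μ.support, μ.p x * (margAlg A μ i (fun g => g i)).expCost x :=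
        Finset.sum_le_sum fun i _ => hard _ (margAlg_computes A μ hsupp hA i)
    _ = _ := margAlg_total A μ (fun i g => g i)

lemma piexp_le (f : PFn (Fin n) Bool β) {m : ℕ} (μ : FinDist (Fin n → Bool))
    (hsupp : ∀ x ∈ μ.support, (f x).isSome) {T : ℝ}
    (A : RandAlg (Fin m × Fin n) Bool (Fin m → β)) (hE : A.ECostLe (dsum m f) T) :
    ∑ t ∈ Fintype.piFinset (fun _ : Fin m => μ.support),
        (∏ i, μ.p (t i)) * A.expCost (fun q => t q.1 q.2) ≤ T := by
  have hw1 : ∑ t ∈ Fintype.piFinset (fun _ : Fin m => μ.support), ∏ i, μ.p (t i) = 1 := by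
    rw [← Finset.prod_univ_sum (fun _ : Fin m => μ.support) (fun _ x => μ.p x)]
    simp [μ.sum_one]
  calc ∑ t ∈ Fintype.piFinset (fun _ : Fin m => μ.support),
        (∏ i, μ.p (t i)) * A.expCost (fun q => t q.1 q.2)
      ≤ ∑ t ∈ Fintype.piFinset (fun _ : Fin m => μ.support), (∏ i, μ.p (t i)) * T := by
        refine Finset.sum_le_sum fun t ht => ?_
        refine mul_le_mul_of_nonneg_left ?_ (Finset.prod_nonneg fun i _ => μ.nonneg _)
        apply hE
        rw [dsum_isSome_iff]
        intro i
        exact hsupp (t i) (Fintype.mem_piFinset.mp ht i)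
    _ = T := by rw [← Finset.sum_mul, hw1, one_mul]

end Assemble
section Final
open Finset

variable {ι : Type} {β : Type}

lemma rbar_le {f : PFn ι Bool β} {ε T : ℝ} (hT0 : 0 ≤ T) (A : RandAlg ι Bool β)
    (hA : A.Computes f ε) (hE : A.ECostLe f T) : Rbar ε f ≤ T := by
  classical
  exact csInf_le (rbarSet_bddBelow f ε) ⟨hT0, A, hA, hE⟩

lemma le_rbar {f : PFn ι Bool β} {ε r : ℝ}
    (hne : ∃ T : ℝ, 0 ≤ T ∧ ∃ A : RandAlg ι Bool β, A.Computes f ε ∧ A.ECostLe f T)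
    (h : ∀ T : ℝ, 0 ≤ T → ∀ A : RandAlg ι Bool β, A.Computes f ε → A.ECostLe f T → r ≤ T) :
    r ≤ Rbar ε f := by
  refine le_csInf hne ?_
  rintro T ⟨hT0, A, hAc, hAe⟩
  exact h T hT0 A hAc hAe

end Final

/-- **Direct sum theorem.** For any `n`-bit partial function `f` and positive integer
`m`: `R₀(f^{⊕m}) = m · R₀(f)`; moreover, if `μ` is a hard distribution for `f`, then
`μ^{⊗m}` is a hard distribution for `f^{⊕m}` (every zero-error algorithm for `f^{⊕m}`
makes at least `m · R₀(f)` expected queries on inputs drawn from `μ^{⊗m}`); and for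
every `ε ∈ [0, 1/2)`, `R̄_ε(f^{⊕m}) ≥ m · R̄_ε(f)`. -/
theorem direct_sum_zero_error {n : ℕ} {β : Type} (f : PFn (Fin n) Bool β)
    (m : ℕ) (hm : 0 < m) :
    R0 (dsum m f) = (m : ℝ) * R0 f ∧
    (∀ μ : FinDist (Fin n → Bool), IsHardDist μ f →
      ∀ A : RandAlg (Fin m × Fin n) Bool (Fin m → β), A.Computes (dsum m f) 0 →
        (m : ℝ) * R0 f ≤
          ∑ t ∈ Fintype.piFinset (fun _ : Fin m => μ.support),
            (∏ i, μ.p (t i)) * A.expCost fun q => t q.1 q.2) ∧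
    (∀ ε : ℝ, 0 ≤ ε → ε < 1/2 → (m : ℝ) * Rbar ε f ≤ Rbar ε (dsum m f)) := by
  classical
  have hm' : (0 : ℝ) < m := by exact_mod_cast hm
  by_cases hβ : Nonempty β
  · obtain ⟨b₀⟩ := hβ
    by_cases hdom : ∃ x, (f x).isSome
    · -- main case: β inhabited and f has nonempty domain
      have hpart2 : ∀ μ : FinDist (Fin n → Bool), IsHardDist μ f →
          ∀ A : RandAlg (Fin m × Fin n) Bool (Fin m → β), A.Computes (dsum m f) 0 →
            (m : ℝ) * R0 f ≤
              ∑ t ∈ Fintype.piFinset (fun _ : Fin m => μ.support),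
                (∏ i, μ.p (t i)) * A.expCost fun q => t q.1 q.2 := by
        intro μ hμ A hA
        exact dsum_lower_core f μ hμ.1 (fun A' hA' => hμ.2 A' hA') A hA
      have h_le : R0 (dsum m f) ≤ (m : ℝ) * R0 f := by
        have h1 : ∀ T : ℝ, 0 ≤ T → ∀ A : RandAlg (Fin n) Bool β,
            A.Computes f 0 → A.ECostLe f T → R0 (dsum m f) ≤ (m : ℝ) * T := by
          intro T hT0 A hAc hAe
          obtain ⟨B, hBc, hBe⟩ := dsum_upper f b₀ hAc hAe
          exact rbar_le (by positivity) B hBc hBe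
        have h2 : R0 (dsum m f) / m ≤ R0 f := by
          refine le_rbar (rbarSet_nonempty f b₀ le_rfl) ?_
          intro T hT0 A hAc hAe
          rw [div_le_iff₀ hm']
          calc R0 (dsum m f) ≤ (m : ℝ) * T := h1 T hT0 A hAc hAe
            _ = T * m := mul_comm _ _
        calc R0 (dsum m f) = (R0 (dsum m f) / m) * m := by field_simp
          _ ≤ R0 f * m := mul_le_mul_of_nonneg_right h2 (le_of_lt hm')
          _ = (m : ℝ) * R0 f := mul_comm _ _
      have h_ge : (m : ℝ) * R0 f ≤ R0 (dsum m f) := by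
        obtain ⟨μ0, hμ0s, hμ0h⟩ := yao f b₀ le_rfl hdom
        refine le_rbar (rbarSet_nonempty (dsum m f) (fun _ => b₀) le_rfl) ?_
        intro T hT0 A hAc hAe
        calc (m : ℝ) * R0 f
            ≤ ∑ t ∈ Fintype.piFinset (fun _ : Fin m => μ0.support),
                (∏ i, μ0.p (t i)) * A.expCost (fun q => t q.1 q.2) :=
              dsum_lower_core f μ0 hμ0s hμ0h A hAc
          _ ≤ T := piexp_le f μ0 hμ0s A hAe
      refine ⟨le_antisymm h_le h_ge, hpart2, ?_⟩
      intro ε hε0 _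
      obtain ⟨με, hμεs, hμεh⟩ := yao f b₀ hε0 hdom
      refine le_rbar (rbarSet_nonempty (dsum m f) (fun _ => b₀) hε0) ?_
      intro T hT0 A hAc hAe
      calc (m : ℝ) * Rbar ε f
          ≤ ∑ t ∈ Fintype.piFinset (fun _ : Fin m => με.support),
              (∏ i, με.p (t i)) * A.expCost (fun q => t q.1 q.2) :=
            dsum_lower_core f με hμεs hμεh A hAc
        _ ≤ T := piexp_le f με hμεs A hAe
    · -- f has empty domain
      have hdom' : ∀ x, ¬ (f x).isSome := by
        intro x hx
        exact hdom ⟨x, hx⟩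
      have hdomd : ∀ z, ¬ (dsum m f z).isSome := by
        intro z hz
        exact hdom' _ ((dsum_isSome_iff.mp hz) ⟨0, hm⟩)
      have h1 : ∀ ε : ℝ, Rbar ε f = 0 := rbar_eq_zero_of_empty_dom f b₀ hdom'
      have h2 : ∀ ε : ℝ, Rbar ε (dsum m f) = 0 :=
        rbar_eq_zero_of_empty_dom (dsum m f) (fun _ => b₀) hdomd
      refine ⟨?_, ?_, ?_⟩
      · show Rbar 0 (dsum m f) = (m : ℝ) * Rbar 0 f
        rw [h1, h2, mul_zero]
      · rintro μ hμ A hA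
        obtain ⟨x, hx⟩ := FinDist.support_nonempty μ
        exact absurd (hμ.1 x hx) (hdom' x)
      · intro ε hε0 _
        rw [h1 ε, h2 ε, mul_zero]
  · -- β is empty
    have hβm : ¬ Nonempty (Fin m → β) := fun ⟨g⟩ => hβ ⟨g ⟨0, hm⟩⟩
    have h1 : ∀ ε : ℝ, Rbar ε f = 0 := rbar_eq_zero_of_no_alg f hβ
    have h2 : ∀ ε : ℝ, Rbar ε (dsum m f) = 0 := rbar_eq_zero_of_no_alg (dsum m f) hβm
    refine ⟨?_, ?_, ?_⟩
    · show Rbar 0 (dsum m f) = (m : ℝ) * Rbar 0 f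
      rw [h1, h2, mul_zero]
    · rintro μ hμ A hA
      exact (randAlg_elim hβm A).elim
    · intro ε hε0 _
      rw [h1 ε, h2 ε, mul_zero]
end

section
/- (Threshold direct sum.) Let f be an n-bit partial function, let μ be a hard distribution for f, and consider a randomized algorithm run on an input to f^{⊕m} drawn from μ^{⊗m}. Say an instance x_i is solved if the positions of x_i queried by the algorithm form a certificate proving the value f(x_i). If the algorithm makes an expected T queries and solves an expected k of the m instances, then T ≥ k · R₀(f). -/
/-! ### Auxiliary machinery for the threshold direct sum theorem -/

section AuxTDS

open Classical

/-- Number of queries a tree on a direct-sum domain makes to instance `i`. -/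
def TDScostI {m : ℕ} {ι α γ : Type} (i : Fin m) :
    DTree (Fin m × ι) α γ → (Fin m × ι → α) → ℕ
  | .leaf _, _ => 0
  | .node q next, z => TDScostI i (next (z q)) z + (if q.1 = i then 1 else 0)

lemma TDSsum_costI {m : ℕ} {ι α γ : Type} (t : DTree (Fin m × ι) α γ)
    (z : Fin m × ι → α) : ∑ i, TDScostI i t z = t.cost z := by
  induction t with
  | leaf b => simp [TDScostI, DTree.cost]
  | node q next ih =>
    simp only [TDScostI, DTree.cost, Finset.sum_add_distrib, ih]
    congr 1
    simp [Finset.sum_ite_eq]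

/-- Merge input `x` at instance `i` with background `y` on the other instances. -/
def TDSmerge {m : ℕ} {ι α : Type} (i : Fin m) (x : ι → α) (y : Fin m × ι → α) :
    Fin m × ι → α :=
  fun q => if q.1 = i then x q.2 else y q

/-- Restriction of a direct-sum tree to instance `i`, with other instances
answered according to `y`. -/
def TDSrestrict {m : ℕ} {ι α γ : Type} (i : Fin m) (y : Fin m × ι → α) :
    DTree (Fin m × ι) α γ → DTree ι α γ
  | .leaf b => .leaf b
  | .node q next =>
    if q.1 = i then .node q.2 (fun a => TDSrestrict i y (next a))
    else TDSrestrict i y (next (y q))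

lemma TDSrestrict_cost {m : ℕ} {ι α γ : Type} (i : Fin m) (y : Fin m × ι → α)
    (t : DTree (Fin m × ι) α γ) (x : ι → α) :
    (TDSrestrict i y t).cost x = TDScostI i t (TDSmerge i x y) := by
  induction t with
  | leaf b => simp [TDSrestrict, TDScostI, DTree.cost]
  | node q next ih =>
    by_cases h : q.1 = i
    · simp only [TDSrestrict, if_pos h, DTree.cost, TDScostI, ih]
      have hz : TDSmerge i x y q = x q.2 := by simp [TDSmerge, h]
      rw [hz]
    · simp only [TDSrestrict, if_neg h, TDScostI, ih]
      have hz : TDSmerge i x y q = y q := by simp [TDSmerge, h]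
      rw [hz]
      simp [h]

lemma TDSrestrict_queries {m : ℕ} {ι α γ : Type} (i : Fin m) (y : Fin m × ι → α)
    (t : DTree (Fin m × ι) α γ) (x : ι → α) :
    (TDSrestrict i y t).queries x = {j | (i, j) ∈ t.queries (TDSmerge i x y)} := by
  induction t with
  | leaf b => simp [TDSrestrict, DTree.queries]
  | node q next ih =>
    by_cases h : q.1 = i
    · obtain ⟨q1, q2⟩ := q
      cases h
      simp only [TDSrestrict, if_pos rfl, ↓reduceIte, DTree.queries]
      have hz : TDSmerge q1 x y (q1, q2) = x q2 := by simp [TDSmerge]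
      rw [hz, ih]
      ext j
      simp only [Set.mem_insert_iff, Set.mem_setOf_eq, Prod.mk.injEq, true_and]
    · simp only [TDSrestrict, if_neg h, DTree.queries]
      have hz : TDSmerge i x y q = y q := by simp [TDSmerge, h]
      rw [hz, ih]
      ext j
      simp only [Set.mem_setOf_eq, Set.mem_insert_iff]
      constructor
      · intro hj; exact Or.inr hj
      · rintro (h1 | h2)
        · exact absurd (congrArg Prod.fst h1).symm h
        · exact h2

end AuxTDS
section AuxTDS2

open Classical

/-- Extend a tree by a certificate check at each leaf, falling back to `s`. -/
noncomputable def TDSextend {ι α β γ : Type} (f : PFn ι α β) (s : DTree ι α β) :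
    DTree ι α γ → (ι → Option α) → DTree ι α β
  | .leaf _, σ =>
    if h : ∃ b : β, ∀ y, (f y).isSome → (∀ j a, σ j = some a → y j = a) → f y = some b
    then .leaf h.choose else s
  | .node j next, σ =>
    .node j fun a => TDSextend f s (next a) (Function.update σ j (some a))

lemma TDSextend_cost_le {ι α β γ : Type} (f : PFn ι α β) (s : DTree ι α β)
    (t : DTree ι α γ) (σ : ι → Option α) (x : ι → α) :
    (TDSextend f s t σ).cost x ≤ t.cost x + s.cost x := by
  induction t generalizing σ with
  | leaf b =>
    simp only [TDSextend]
    split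
    · simp [DTree.cost]
    · simp [DTree.cost]
  | node j next ih =>
    simp only [TDSextend, DTree.cost]
    have := ih (x j) (Function.update σ j (some (x j)))
    omega

lemma TDSextend_cost_of_cert {ι α β γ : Type} (f : PFn ι α β) (s : DTree ι α β)
    (t : DTree ι α γ) (σ : ι → Option α) (x : ι → α)
    (hσ : ∀ j a, σ j = some a → x j = a)
    (hc : IsCert f ({j | σ j ≠ none} ∪ t.queries x) x) :
    (TDSextend f s t σ).cost x ≤ t.cost x := by
  induction t generalizing σ with
  | leaf b =>
    simp only [TDSextend]
    rw [dif_pos ?_]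
    · simp [DTree.cost]
    · obtain ⟨hx, hcert⟩ := hc
      obtain ⟨b0, hb0⟩ := Option.isSome_iff_exists.1 hx
      refine ⟨b0, fun y hy hcons => ?_⟩
      rw [hcert y hy ?_, hb0]
      intro j hj
      rcases hj with hj | hj
      · obtain ⟨a, ha⟩ := Option.ne_none_iff_exists'.1 hj
        rw [hcons j a ha, hσ j a ha]
      · exact absurd hj (Set.notMem_empty j)
  | node j next ih =>
    simp only [TDSextend, DTree.cost]
    have key : (TDSextend f s (next (x j)) (Function.update σ j (some (x j)))).cost x
        ≤ (next (x j)).cost x := by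
      apply ih
      · intro j' a ha
        by_cases hjj : j' = j
        · subst hjj
          rw [Function.update_self] at ha
          exact Option.some_inj.1 ha
        · exact hσ j' a (by rwa [Function.update_of_ne hjj] at ha)
      · have hset : {j' | Function.update σ j (some (x j)) j' ≠ none} ∪ (next (x j)).queries x
            = {j' | σ j' ≠ none} ∪ (DTree.node j next).queries x := by
          ext j'
          by_cases hjj : j' = j
          · subst hjj
            simp [DTree.queries, Function.update_self]
          · simp [DTree.queries, Function.update_of_ne hjj, hjj]
        rw [hset]
        exact hc
    omega

lemma TDSextend_output {ι α β γ : Type} (f : PFn ι α β) (s : DTree ι α β)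
    (t : DTree ι α γ) (σ : ι → Option α) (x : ι → α) (b : β)
    (hb : f x = some b) (hσ : ∀ j a, σ j = some a → x j = a)
    (hs : s.output x = b) :
    (TDSextend f s t σ).output x = b := by
  induction t generalizing σ with
  | leaf c =>
    simp only [TDSextend]
    split
    case isTrue h =>
      have h2 := h.choose_spec x (by simp [hb]) (fun j a ha => hσ j a ha)
      simp only [DTree.output]
      rw [hb] at h2
      exact (Option.some_inj.1 h2).symm
    case isFalse h => exact hs
  | node j next ih =>
    simp only [TDSextend, DTree.output]
    apply ih
    intro j' a ha
    by_cases hjj : j' = j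
    · subst hjj
      rw [Function.update_self] at ha
      exact Option.some_inj.1 ha
    · exact hσ j' a (by rwa [Function.update_of_ne hjj] at ha)

lemma TDScomputes_pointwise {ι α β : Type} {A : RandAlg ι α β} {f : PFn ι α β}
    (hA : A.Computes f 0) {x : ι → α} {b : β} (hb : f x = some b) :
    ∀ ω, A.p ω ≠ 0 → (A.tree ω).output x = b := by
  letI := A.fin
  intro ω hω
  by_contra hne
  have h1 : (1 : ℝ) - 0 ≤ A.succProb x b := hA x b hb
  have h2 : A.succProb x b ≤ ∑ ω', (if ω' = ω then 0 else A.p ω') := by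
    unfold RandAlg.succProb
    apply Finset.sum_le_sum
    intro ω' _
    by_cases h : ω' = ω
    · subst h; simp [hne]
    · rw [if_neg h]
      split
      · exact le_refl _
      · exact A.nonneg ω'
  have h3 : ∑ ω', (if ω' = ω then 0 else A.p ω') = 1 - A.p ω := by
    have : ∀ ω' : A.Ω, (if ω' = ω then 0 else A.p ω')
        = A.p ω' - (if ω' = ω then A.p ω' else 0) := by
      intro ω'; split <;> ring
    rw [Finset.sum_congr rfl fun ω' _ => this ω', Finset.sum_sub_distrib, A.sum_one,
      Finset.sum_ite_eq' Finset.univ ω A.p, if_pos (Finset.mem_univ ω)]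
  have h4 := A.nonneg ω
  rw [h3] at h2
  have : A.p ω = 0 := by linarith
  exact hω this

end AuxTDS2
section AuxTDS3

open Classical

/-- Combine an arbitrary algorithm `B` with a zero-error algorithm `Astar`:
run `B`, output a certified value if `B` queried a certificate, else run `Astar`. -/
noncomputable def TDSglue {ι α β γ : Type} (f : PFn ι α β) (B : RandAlg ι α γ)
    (Astar : RandAlg ι α β) : RandAlg ι α β :=
  letI := B.fin; letI := Astar.fin
  { Ω := B.Ω × Astar.Ω
    p := fun ω => B.p ω.1 * Astar.p ω.2
    nonneg := fun ω => mul_nonneg (B.nonneg ω.1) (Astar.nonneg ω.2)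
    sum_one := by
      rw [Fintype.sum_prod_type]
      have h : ∀ a : B.Ω, ∑ b : Astar.Ω, B.p a * Astar.p b = B.p a := by
        intro a; rw [← Finset.mul_sum, Astar.sum_one, mul_one]
      rw [Finset.sum_congr rfl fun a _ => h a, B.sum_one]
    tree := fun ω => TDSextend f (Astar.tree ω.2) (B.tree ω.1) fun _ => none }

lemma TDScertProb_nonneg {ι α β γ : Type} (B : RandAlg ι α γ) (f : PFn ι α β)
    (x : ι → α) : 0 ≤ B.certProb f x := by
  letI := B.fin
  unfold RandAlg.certProb
  apply Finset.sum_nonneg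
  intro ω _
  split
  · exact B.nonneg ω
  · exact le_refl 0

lemma TDScertProb_le_one {ι α β γ : Type} (B : RandAlg ι α γ) (f : PFn ι α β)
    (x : ι → α) : B.certProb f x ≤ 1 := by
  letI := B.fin
  rw [← B.sum_one]
  unfold RandAlg.certProb
  apply Finset.sum_le_sum
  intro ω _
  split
  · exact le_refl _
  · exact B.nonneg ω

lemma TDSexpCost_nonneg {ι α β : Type} (B : RandAlg ι α β) (x : ι → α) :
    0 ≤ B.expCost x := by
  letI := B.fin
  unfold RandAlg.expCost
  exact Finset.sum_nonneg fun ω _ => mul_nonneg (B.nonneg ω) (Nat.cast_nonneg _)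

/-- Core lemma: the `m = 1` version of the threshold direct sum theorem. -/
lemma TDScore {n : ℕ} {β γ : Type} (f : PFn (Fin n) Bool β)
    (μ : FinDist (Fin n → Bool)) (hμ : IsHardDist μ f)
    (B : RandAlg (Fin n) Bool γ) :
    (∑ x ∈ μ.support, μ.p x * B.certProb f x) * R0 f ≤
      ∑ x ∈ μ.support, μ.p x * B.expCost x := by
  letI := B.fin
  set q := ∑ x ∈ μ.support, μ.p x * B.certProb f x with hqdef
  set c := ∑ x ∈ μ.support, μ.p x * B.expCost x with hcdef
  have hq0 : 0 ≤ q :=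
    Finset.sum_nonneg fun x _ => mul_nonneg (μ.nonneg x) (TDScertProb_nonneg B f x)
  have hq1 : q ≤ 1 := by
    have : q ≤ ∑ x ∈ μ.support, μ.p x := by
      apply Finset.sum_le_sum
      intro x _
      calc μ.p x * B.certProb f x ≤ μ.p x * 1 :=
            mul_le_mul_of_nonneg_left (TDScertProb_le_one B f x) (μ.nonneg x)
        _ = μ.p x := mul_one _
    rw [μ.sum_one] at this
    exact this
  have hc0 : 0 ≤ c :=
    Finset.sum_nonneg fun x _ => mul_nonneg (μ.nonneg x) (TDSexpCost_nonneg B x)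
  have hR0 : 0 ≤ R0 f := Real.sInf_nonneg fun T hT => hT.1
  by_cases hne : {T : ℝ | 0 ≤ T ∧
      ∃ A : RandAlg (Fin n) Bool β, A.Computes f 0 ∧ A.ECostLe f T}.Nonempty
  swap
  · have hempty : R0 f = 0 := by
      unfold R0 Rbar
      rw [Set.not_nonempty_iff_eq_empty.1 hne, Real.sInf_empty]
    rw [hempty, mul_zero]
    exact hc0
  refine le_of_forall_pos_le_add fun ε hε => ?_
  obtain ⟨Ts, hTmem, hTlt⟩ := Real.lt_sInf_add_pos hne hε
  have hTR0 : Ts < R0 f + ε := hTlt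
  obtain ⟨hTs0, Astar, hAc, hAe⟩ := hTmem
  letI := Astar.fin
  set C := TDSglue f B Astar with hCdef
  have hCc : C.Computes f 0 := by
    intro x b hb
    have hone : C.succProb x b = 1 := by
      unfold RandAlg.succProb
      rw [← C.sum_one]
      apply Finset.sum_congr rfl
      intro ω _
      by_cases hp : C.p ω = 0
      · rw [hp]; split <;> rfl
      · rw [if_pos]
        have hAp : Astar.p ω.2 ≠ 0 := by
          intro h0
          exact hp (by show B.p ω.1 * Astar.p ω.2 = 0; rw [h0, mul_zero])
        show (TDSextend f (Astar.tree ω.2) (B.tree ω.1) fun _ => none).output x = b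
        exact TDSextend_output f _ _ _ x b hb (by simp)
          (TDScomputes_pointwise hAc hb ω.2 hAp)
    rw [hone]
    norm_num
  have hhard := hμ.2 C hCc
  have hbound : ∀ x ∈ μ.support,
      C.expCost x ≤ B.expCost x + (1 - B.certProb f x) * Ts := by
    intro x hx
    have hfx : (f x).isSome := hμ.1 x hx
    have hAx : Astar.expCost x ≤ Ts := hAe x hfx
    have key : ∀ ω : B.Ω,
        ∑ ω' : Astar.Ω, (B.p ω * Astar.p ω') *
            (((TDSextend f (Astar.tree ω') (B.tree ω) fun _ => none).cost x : ℝ))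
          ≤ B.p ω * ((B.tree ω).cost x : ℝ) +
            (if IsCert f ((B.tree ω).queries x) x then 0 else B.p ω * Ts) := by
      intro ω
      by_cases hcert : IsCert f ((B.tree ω).queries x) x
      · rw [if_pos hcert, add_zero]
        have hcost : ∀ ω' : Astar.Ω,
            ((TDSextend f (Astar.tree ω') (B.tree ω) fun _ => none).cost x : ℝ)
              ≤ ((B.tree ω).cost x : ℝ) := by
          intro ω'
          have := TDSextend_cost_of_cert f (Astar.tree ω') (B.tree ω)
            (fun _ => none) x (by intro j a h; simp at h)
            (by
              have hset : ({j | (fun _ : Fin n => (none : Option Bool)) j ≠ none}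
                  ∪ (B.tree ω).queries x) = (B.tree ω).queries x := by
                ext j; simp
              rw [hset]
              exact hcert)
          exact_mod_cast this
        calc ∑ ω' : Astar.Ω, (B.p ω * Astar.p ω') *
              ((TDSextend f (Astar.tree ω') (B.tree ω) fun _ => none).cost x : ℝ)
            ≤ ∑ ω' : Astar.Ω, (B.p ω * Astar.p ω') * ((B.tree ω).cost x : ℝ) := by
              apply Finset.sum_le_sum
              intro ω' _
              exact mul_le_mul_of_nonneg_left (hcost ω')
                (mul_nonneg (B.nonneg ω) (Astar.nonneg ω'))
          _ = B.p ω * ((B.tree ω).cost x : ℝ) := by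
              have : ∀ ω' : Astar.Ω, (B.p ω * Astar.p ω') * ((B.tree ω).cost x : ℝ)
                  = Astar.p ω' * (B.p ω * ((B.tree ω).cost x : ℝ)) := by intro; ring
              rw [Finset.sum_congr rfl fun ω' _ => this ω', ← Finset.sum_mul,
                Astar.sum_one, one_mul]
      · rw [if_neg hcert]
        have hcost : ∀ ω' : Astar.Ω,
            ((TDSextend f (Astar.tree ω') (B.tree ω) fun _ => none).cost x : ℝ)
              ≤ ((B.tree ω).cost x : ℝ) + ((Astar.tree ω').cost x : ℝ) := by
          intro ω'
          exact_mod_cast TDSextend_cost_le f (Astar.tree ω') (B.tree ω) (fun _ => none) x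
        calc ∑ ω' : Astar.Ω, (B.p ω * Astar.p ω') *
              ((TDSextend f (Astar.tree ω') (B.tree ω) fun _ => none).cost x : ℝ)
            ≤ ∑ ω' : Astar.Ω, (B.p ω * Astar.p ω') *
                (((B.tree ω).cost x : ℝ) + ((Astar.tree ω').cost x : ℝ)) := by
              apply Finset.sum_le_sum
              intro ω' _
              exact mul_le_mul_of_nonneg_left (hcost ω')
                (mul_nonneg (B.nonneg ω) (Astar.nonneg ω'))
          _ = B.p ω * ((B.tree ω).cost x : ℝ) + B.p ω * Astar.expCost x := by
              have : ∀ ω' : Astar.Ω, (B.p ω * Astar.p ω') *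
                  (((B.tree ω).cost x : ℝ) + ((Astar.tree ω').cost x : ℝ))
                  = Astar.p ω' * (B.p ω * ((B.tree ω).cost x : ℝ))
                    + B.p ω * (Astar.p ω' * ((Astar.tree ω').cost x : ℝ)) := by
                intro; ring
              rw [Finset.sum_congr rfl fun ω' _ => this ω', Finset.sum_add_distrib,
                ← Finset.sum_mul, Astar.sum_one, one_mul, ← Finset.mul_sum]
              rfl
          _ ≤ B.p ω * ((B.tree ω).cost x : ℝ) + B.p ω * Ts :=
              add_le_add_right (mul_le_mul_of_nonneg_left hAx (B.nonneg ω)) _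
    have hstep : C.expCost x ≤ ∑ ω : B.Ω, (B.p ω * ((B.tree ω).cost x : ℝ) +
        (if IsCert f ((B.tree ω).queries x) x then 0 else B.p ω * Ts)) := by
      show (∑ ωp : B.Ω × Astar.Ω, C.p ωp * (((C.tree ωp).cost x : ℝ))) ≤ _
      rw [Fintype.sum_prod_type]
      exact Finset.sum_le_sum fun ω _ => key ω
    refine hstep.trans (le_of_eq ?_)
    rw [Finset.sum_add_distrib]
    congr 1
    have h1 : ∀ ω : B.Ω, (if IsCert f ((B.tree ω).queries x) x then 0 else B.p ω * Ts)
        = (B.p ω - (if IsCert f ((B.tree ω).queries x) x then B.p ω else 0)) * Ts := by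
      intro ω; split <;> ring
    rw [Finset.sum_congr rfl fun ω _ => h1 ω, ← Finset.sum_mul, Finset.sum_sub_distrib,
      B.sum_one]
    rfl
  have hsum : ∑ x ∈ μ.support, μ.p x * C.expCost x ≤ c + (1 - q) * Ts := by
    have h1 : ∑ x ∈ μ.support, μ.p x * C.expCost x
        ≤ ∑ x ∈ μ.support, μ.p x * (B.expCost x + (1 - B.certProb f x) * Ts) :=
      Finset.sum_le_sum fun x hx =>
        mul_le_mul_of_nonneg_left (hbound x hx) (μ.nonneg x)
    refine h1.trans (le_of_eq ?_)
    have h2 : ∀ x, μ.p x * (B.expCost x + (1 - B.certProb f x) * Ts)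
        = μ.p x * B.expCost x + (μ.p x - μ.p x * B.certProb f x) * Ts := by
      intro x; ring
    rw [Finset.sum_congr rfl fun x _ => h2 x, Finset.sum_add_distrib, ← Finset.sum_mul,
      Finset.sum_sub_distrib, μ.sum_one, ← hqdef, ← hcdef]
  have hfinal : R0 f ≤ c + (1 - q) * Ts := hhard.trans hsum
  have hprod1 : 0 ≤ (1 - q) * (R0 f + ε - Ts) :=
    mul_nonneg (by linarith) (by linarith)
  have hprod2 : 0 ≤ q * ε := mul_nonneg hq0 hε.le
  nlinarith [hfinal, hprod1, hprod2]

end AuxTDS3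
section AuxTDS4

open Classical

/-- Resampling identity: replacing coordinate `i` of a product-distributed tuple by a
fresh sample does not change expectations. -/
lemma TDSresample {m : ℕ} {X : Type} (S : Finset X) (w : X → ℝ)
    (hw : ∑ x ∈ S, w x = 1) (i : Fin m) (g : (Fin m → X) → ℝ) :
    ∑ x ∈ S, w x * ∑ t ∈ Fintype.piFinset (fun _ : Fin m => S),
        (∏ j, w (t j)) * g (Function.update t i x)
      = ∑ t ∈ Fintype.piFinset (fun _ : Fin m => S), (∏ j, w (t j)) * g t := by
  classical
  set P := Fintype.piFinset (fun _ : Fin m => S) with hP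
  have lhs_eq : (∑ x ∈ S, w x * ∑ t ∈ P, (∏ j, w (t j)) * g (Function.update t i x))
      = ∑ p ∈ S ×ˢ P, w p.1 * ((∏ j, w (p.2 j)) * g (Function.update p.2 i p.1)) := by
    rw [Finset.sum_product]
    exact Finset.sum_congr rfl fun x _ => by rw [Finset.mul_sum]
  have rhs_eq : (∑ t ∈ P, (∏ j, w (t j)) * g t)
      = ∑ p ∈ S ×ˢ P, w p.1 * ((∏ j, w (p.2 j)) * g p.2) := by
    calc ∑ t ∈ P, (∏ j, w (t j)) * g t
        = (∑ x ∈ S, w x) * ∑ t ∈ P, (∏ j, w (t j)) * g t := by rw [hw, one_mul]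
      _ = ∑ x ∈ S, w x * ∑ t ∈ P, (∏ j, w (t j)) * g t := Finset.sum_mul _ _ _
      _ = ∑ p ∈ S ×ˢ P, w p.1 * ((∏ j, w (p.2 j)) * g p.2) := by
          rw [Finset.sum_product]
          exact Finset.sum_congr rfl fun x _ => by rw [Finset.mul_sum]
  rw [lhs_eq, rhs_eq]
  have hmem : ∀ p ∈ S ×ˢ P, (p.2 i, Function.update p.2 i p.1) ∈ S ×ˢ P := by
    intro p hp
    obtain ⟨h1, h2⟩ := Finset.mem_product.1 hp
    refine Finset.mem_product.2 ⟨Fintype.mem_piFinset.1 h2 i, Fintype.mem_piFinset.2 ?_⟩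
    intro j
    by_cases hji : j = i
    · subst hji; simpa using h1
    · simpa [Function.update_of_ne hji] using Fintype.mem_piFinset.1 h2 j
  have hinv : ∀ p : X × (Fin m → X),
      ((Function.update p.2 i p.1) i,
        Function.update (Function.update p.2 i p.1) i (p.2 i)) = p := by
    intro p
    rw [Function.update_self, Function.update_idem, Function.update_eq_self]
  refine Finset.sum_nbij' (fun p => (p.2 i, Function.update p.2 i p.1))
    (fun p => (p.2 i, Function.update p.2 i p.1)) hmem hmem
    (fun p _ => hinv p) (fun p _ => hinv p) ?_
  intro p hp
  obtain ⟨x, t⟩ := p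
  simp only
  have hprod : w x * ∏ j, w (t j) = w (t i) * ∏ j, w (Function.update t i x j) := by
    have hcomp : (fun j => w (Function.update t i x j))
        = Function.update (fun j => w (t j)) i (w x) := by
      funext j
      by_cases hji : j = i
      · subst hji; rw [Function.update_self, Function.update_self]
      · rw [Function.update_of_ne hji, Function.update_of_ne hji]
    calc w x * ∏ j, w (t j)
        = w x * (w (t i) * ∏ j ∈ Finset.univ.erase i, w (t j)) := by
          rw [← Finset.mul_prod_erase Finset.univ _ (Finset.mem_univ i)]
      _ = w (t i) * (w x * ∏ j ∈ Finset.univ \ {i}, w (t j)) := by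
          rw [Finset.erase_eq]; ring
      _ = w (t i) * ∏ j, w (Function.update t i x j) := by
          rw [show (∏ j, w (Function.update t i x j))
              = ∏ j, Function.update (fun j => w (t j)) i (w x) j from by rw [hcomp],
            Finset.prod_update_of_mem (Finset.mem_univ i)]
  calc w x * ((∏ j, w (t j)) * g (Function.update t i x))
      = (w x * ∏ j, w (t j)) * g (Function.update t i x) := by ring
    _ = (w (t i) * ∏ j, w (Function.update t i x j)) * g (Function.update t i x) := by
        rw [hprod]
    _ = w (t i) * ((∏ j, w (Function.update t i x j)) * g (Function.update t i x)) := by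
        ring

/-- The main summation identity behind the embedding argument. -/
lemma TDSmain_step {m : ℕ} {X Ωa : Type} [Fintype Ωa] (S : Finset X) (w : X → ℝ)
    (hw : ∑ x ∈ S, w x = 1) (pa : Ωa → ℝ) (i : Fin m)
    (G : Ωa → (Fin m → X) → ℝ) :
    ∑ x ∈ S, w x * ∑ ωp : Ωa × ↥(Fintype.piFinset fun _ : Fin m => S),
        (pa ωp.1 * ∏ j, w (ωp.2.1 j)) * G ωp.1 (Function.update ωp.2.1 i x)
      = ∑ t ∈ Fintype.piFinset (fun _ : Fin m => S),
          (∏ j, w (t j)) * ∑ ω, pa ω * G ω t := by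
  classical
  set P := Fintype.piFinset (fun _ : Fin m => S) with hP
  have step1 : ∀ x : X, (∑ ωp : Ωa × ↥P,
      (pa ωp.1 * ∏ j, w (ωp.2.1 j)) * G ωp.1 (Function.update ωp.2.1 i x))
      = ∑ ω : Ωa, pa ω * ∑ t ∈ P, (∏ j, w (t j)) * G ω (Function.update t i x) := by
    intro x
    rw [Fintype.sum_prod_type]
    apply Finset.sum_congr rfl
    intro ω _
    rw [Finset.sum_coe_sort P
      (fun t => (pa ω * ∏ j, w (t j)) * G ω (Function.update t i x)), Finset.mul_sum]
    apply Finset.sum_congr rfl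
    intro t _
    ring
  calc ∑ x ∈ S, w x * ∑ ωp : Ωa × ↥P,
        (pa ωp.1 * ∏ j, w (ωp.2.1 j)) * G ωp.1 (Function.update ωp.2.1 i x)
      = ∑ x ∈ S, ∑ ω : Ωa, pa ω *
          (w x * ∑ t ∈ P, (∏ j, w (t j)) * G ω (Function.update t i x)) := by
        apply Finset.sum_congr rfl
        intro x _
        rw [step1 x, Finset.mul_sum]
        apply Finset.sum_congr rfl
        intro ω _
        ring
    _ = ∑ ω : Ωa, pa ω *
          ∑ x ∈ S, w x * ∑ t ∈ P, (∏ j, w (t j)) * G ω (Function.update t i x) := by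
        rw [Finset.sum_comm]
        apply Finset.sum_congr rfl
        intro ω _
        rw [Finset.mul_sum]
    _ = ∑ ω : Ωa, pa ω * ∑ t ∈ P, (∏ j, w (t j)) * G ω t := by
        apply Finset.sum_congr rfl
        intro ω _
        rw [TDSresample S w hw i (G ω)]
    _ = ∑ ω : Ωa, ∑ t ∈ P, pa ω * ((∏ j, w (t j)) * G ω t) := by
        apply Finset.sum_congr rfl
        intro ω _
        rw [Finset.mul_sum]
    _ = ∑ t ∈ P, ∑ ω : Ωa, pa ω * ((∏ j, w (t j)) * G ω t) := Finset.sum_comm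
    _ = ∑ t ∈ P, (∏ j, w (t j)) * ∑ ω, pa ω * G ω t := by
        apply Finset.sum_congr rfl
        intro t _
        rw [Finset.mul_sum]
        apply Finset.sum_congr rfl
        intro ω _
        ring

end AuxTDS4
section AuxTDS5

open Classical

lemma TDSmerge_update {m n : ℕ} (i : Fin m) (x : Fin n → Bool)
    (t : Fin m → Fin n → Bool) :
    TDSmerge i x (fun q : Fin m × Fin n => t q.1 q.2)
      = fun q : Fin m × Fin n => Function.update t i x q.1 q.2 := by
  funext q
  unfold TDSmerge
  by_cases h : q.1 = i
  · rw [if_pos h, h, Function.update_self]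
  · rw [if_neg h, Function.update_of_ne h]

lemma TDSsolvedCount_cast {m : ℕ} {ι α β γ : Type} (f : PFn ι α β)
    (t : DTree (Fin m × ι) α γ) (z : Fin m × ι → α) :
    (solvedCount f t z : ℝ)
      = ∑ i : Fin m, if SolvesInstance f t z i then (1 : ℝ) else 0 := by
  unfold solvedCount
  rw [Finset.card_filter, Nat.cast_sum]
  apply Finset.sum_congr rfl
  intro i _
  split <;> simp

/-- The single-instance algorithm obtained from `A` by embedding the input at
instance `i` and sampling the other instances from `μ`. -/
noncomputable def TDSBi {n m : ℕ} {γ : Type} (μ : FinDist (Fin n → Bool))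
    (A : RandAlg (Fin m × Fin n) Bool γ) (i : Fin m) : RandAlg (Fin n) Bool γ :=
  letI := A.fin
  { Ω := A.Ω × ↥(Fintype.piFinset fun _ : Fin m => μ.support)
    p := fun ω => A.p ω.1 * ∏ j, μ.p (ω.2.1 j)
    nonneg := fun ω =>
      mul_nonneg (A.nonneg ω.1) (Finset.prod_nonneg fun j _ => μ.nonneg _)
    sum_one := by
      rw [Fintype.sum_prod_type]
      have hw : (∑ tp : ↥(Fintype.piFinset fun _ : Fin m => μ.support),
          ∏ j, μ.p (tp.1 j)) = 1 := by
        rw [Finset.sum_coe_sort (Fintype.piFinset fun _ : Fin m => μ.support)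
          (fun t => ∏ j, μ.p (t j)), ← Finset.prod_univ_sum]
        simp [μ.sum_one]
      have h : ∀ ω : A.Ω, (∑ tp : ↥(Fintype.piFinset fun _ : Fin m => μ.support),
          A.p ω * ∏ j, μ.p (tp.1 j)) = A.p ω := by
        intro ω
        rw [← Finset.mul_sum, hw, mul_one]
      rw [Finset.sum_congr rfl fun ω _ => h ω, A.sum_one]
    tree := fun ω => TDSrestrict i (fun q => ω.2.1 q.1 q.2) (A.tree ω.1) }

end AuxTDS5
/-- **Threshold direct sum theorem.** Let `μ` be a hard distribution for the `n`-bit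
partial function `f`. Any randomized algorithm run on an input to `f^{⊕m}` drawn from
`μ^{⊗m}` that makes an expected `T` queries and solves (i.e., queries a certificate
for) an expected `k` of the `m` instances satisfies `T ≥ k · R₀(f)`. -/
theorem threshold_direct_sum {n : ℕ} {β γ : Type} (f : PFn (Fin n) Bool β)
    (μ : FinDist (Fin n → Bool)) (hμ : IsHardDist μ f) (m : ℕ)
    (A : RandAlg (Fin m × Fin n) Bool γ) (T k : ℝ)
    (hT : T = ∑ t ∈ Fintype.piFinset (fun _ : Fin m => μ.support),
        (∏ i, μ.p (t i)) * A.expCost fun q => t q.1 q.2)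
    (hk : k = ∑ t ∈ Fintype.piFinset (fun _ : Fin m => μ.support),
        (∏ i, μ.p (t i)) * A.expSolved f fun q => t q.1 q.2) :
    k * R0 f ≤ T := by
  classical
  letI := A.fin
  set P := Fintype.piFinset (fun _ : Fin m => μ.support) with hP
  have hTsum : T = ∑ i : Fin m, ∑ t ∈ P, (∏ j, μ.p (t j)) *
      ∑ ω, A.p ω * (TDScostI i (A.tree ω) (fun q => t q.1 q.2) : ℝ) := by
    rw [hT]
    calc ∑ t ∈ P, (∏ j, μ.p (t j)) * A.expCost (fun q => t q.1 q.2)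
        = ∑ t ∈ P, ∑ ω, ∑ i : Fin m, (∏ j, μ.p (t j)) *
            (A.p ω * (TDScostI i (A.tree ω) (fun q => t q.1 q.2) : ℝ)) := by
          apply Finset.sum_congr rfl
          intro t _
          show (∏ j, μ.p (t j)) * ∑ ω, A.p ω * (((A.tree ω).cost fun q => t q.1 q.2 : ℕ) : ℝ) = _
          rw [Finset.mul_sum]
          apply Finset.sum_congr rfl
          intro ω _
          have hc : (((A.tree ω).cost fun q => t q.1 q.2 : ℕ) : ℝ)
              = ∑ i : Fin m, (TDScostI i (A.tree ω) (fun q => t q.1 q.2) : ℝ) := by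
            rw [← Nat.cast_sum, TDSsum_costI]
          rw [hc, Finset.mul_sum, Finset.mul_sum]
      _ = ∑ i : Fin m, ∑ t ∈ P, ∑ ω, (∏ j, μ.p (t j)) *
            (A.p ω * (TDScostI i (A.tree ω) (fun q => t q.1 q.2) : ℝ)) := by
          rw [Finset.sum_congr rfl fun t _ =>
            (Finset.sum_comm : (∑ ω, ∑ i : Fin m, (∏ j, μ.p (t j)) *
              (A.p ω * (TDScostI i (A.tree ω) (fun q => t q.1 q.2) : ℝ)))
              = ∑ i : Fin m, ∑ ω, _), Finset.sum_comm]
      _ = ∑ i : Fin m, ∑ t ∈ P, (∏ j, μ.p (t j)) *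
            ∑ ω, A.p ω * (TDScostI i (A.tree ω) (fun q => t q.1 q.2) : ℝ) := by
          apply Finset.sum_congr rfl
          intro i _
          apply Finset.sum_congr rfl
          intro t _
          rw [Finset.mul_sum]
  have hksum : k = ∑ i : Fin m, ∑ t ∈ P, (∏ j, μ.p (t j)) *
      ∑ ω, A.p ω * (if SolvesInstance f (A.tree ω) (fun q => t q.1 q.2) i
        then (1 : ℝ) else 0) := by
    rw [hk]
    calc ∑ t ∈ P, (∏ j, μ.p (t j)) * A.expSolved f (fun q => t q.1 q.2)
        = ∑ t ∈ P, ∑ ω, ∑ i : Fin m, (∏ j, μ.p (t j)) *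
            (A.p ω * (if SolvesInstance f (A.tree ω) (fun q => t q.1 q.2) i
              then (1 : ℝ) else 0)) := by
          apply Finset.sum_congr rfl
          intro t _
          show (∏ j, μ.p (t j)) * ∑ ω, A.p ω *
              ((solvedCount f (A.tree ω) fun q => t q.1 q.2 : ℕ) : ℝ) = _
          rw [Finset.mul_sum]
          apply Finset.sum_congr rfl
          intro ω _
          rw [TDSsolvedCount_cast, Finset.mul_sum, Finset.mul_sum]
      _ = ∑ i : Fin m, ∑ t ∈ P, ∑ ω, (∏ j, μ.p (t j)) *
            (A.p ω * (if SolvesInstance f (A.tree ω) (fun q => t q.1 q.2) i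
              then (1 : ℝ) else 0)) := by
          rw [Finset.sum_congr rfl fun t _ =>
            (Finset.sum_comm : (∑ ω, ∑ i : Fin m, (∏ j, μ.p (t j)) *
              (A.p ω * (if SolvesInstance f (A.tree ω) (fun q => t q.1 q.2) i
                then (1 : ℝ) else 0)))
              = ∑ i : Fin m, ∑ ω, _), Finset.sum_comm]
      _ = ∑ i : Fin m, ∑ t ∈ P, (∏ j, μ.p (t j)) *
            ∑ ω, A.p ω * (if SolvesInstance f (A.tree ω) (fun q => t q.1 q.2) i
              then (1 : ℝ) else 0) := by
          apply Finset.sum_congr rfl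
          intro i _
          apply Finset.sum_congr rfl
          intro t _
          rw [Finset.mul_sum]
  have hkey : ∀ i : Fin m,
      (∑ t ∈ P, (∏ j, μ.p (t j)) *
        ∑ ω, A.p ω * (if SolvesInstance f (A.tree ω) (fun q => t q.1 q.2) i
          then (1 : ℝ) else 0)) * R0 f
      ≤ ∑ t ∈ P, (∏ j, μ.p (t j)) *
          ∑ ω, A.p ω * (TDScostI i (A.tree ω) (fun q => t q.1 q.2) : ℝ) := by
    intro i
    have hmain := TDScore f μ hμ (TDSBi μ A i)
    have hE : ∑ x ∈ μ.support, μ.p x * (TDSBi μ A i).expCost x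
        = ∑ t ∈ P, (∏ j, μ.p (t j)) *
            ∑ ω, A.p ω * (TDScostI i (A.tree ω) (fun q => t q.1 q.2) : ℝ) := by
      have hexp : ∀ x, (TDSBi μ A i).expCost x
          = ∑ ωp : A.Ω × ↥P, (A.p ωp.1 * ∏ j, μ.p (ωp.2.1 j)) *
              (TDScostI i (A.tree ωp.1)
                (fun q => Function.update ωp.2.1 i x q.1 q.2) : ℝ) := by
        intro x
        show (∑ ωp : A.Ω × ↥P, (A.p ωp.1 * ∏ j, μ.p (ωp.2.1 j)) *
            (((TDSrestrict i (fun q => ωp.2.1 q.1 q.2) (A.tree ωp.1)).cost x : ℕ) : ℝ)) = _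
        apply Finset.sum_congr rfl
        intro ωp _
        rw [TDSrestrict_cost, TDSmerge_update]
      rw [Finset.sum_congr rfl fun x _ => by rw [hexp x]]
      exact TDSmain_step μ.support μ.p μ.sum_one A.p i
        (fun ω s => (TDScostI i (A.tree ω) (fun q => s q.1 q.2) : ℝ))
    have hC : ∑ x ∈ μ.support, μ.p x * (TDSBi μ A i).certProb f x
        = ∑ t ∈ P, (∏ j, μ.p (t j)) *
            ∑ ω, A.p ω * (if SolvesInstance f (A.tree ω) (fun q => t q.1 q.2) i
              then (1 : ℝ) else 0) := by
      have hcp : ∀ x, (TDSBi μ A i).certProb f x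
          = ∑ ωp : A.Ω × ↥P, (A.p ωp.1 * ∏ j, μ.p (ωp.2.1 j)) *
              (if SolvesInstance f (A.tree ωp.1)
                  (fun q => Function.update ωp.2.1 i x q.1 q.2) i
                then (1 : ℝ) else 0) := by
        intro x
        show (∑ ωp : A.Ω × ↥P,
            if IsCert f ((TDSrestrict i (fun q => ωp.2.1 q.1 q.2) (A.tree ωp.1)).queries x) x
            then A.p ωp.1 * ∏ j, μ.p (ωp.2.1 j) else 0) = _
        apply Finset.sum_congr rfl
        intro ωp _
        have hiff : IsCert f
              ((TDSrestrict i (fun q => ωp.2.1 q.1 q.2) (A.tree ωp.1)).queries x) x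
            ↔ SolvesInstance f (A.tree ωp.1)
                (fun q => Function.update ωp.2.1 i x q.1 q.2) i := by
          rw [TDSrestrict_queries, TDSmerge_update]
          unfold SolvesInstance
          have hx : (fun j => (fun q : Fin m × Fin n =>
              Function.update ωp.2.1 i x q.1 q.2) (i, j)) = x := by
            funext j
            simp
          rw [hx]
        rw [mul_ite, mul_one, mul_zero]
        exact if_congr hiff rfl rfl
      rw [Finset.sum_congr rfl fun x _ => by rw [hcp x]]
      exact TDSmain_step μ.support μ.p μ.sum_one A.p i
        (fun ω s => if SolvesInstance f (A.tree ω) (fun q => s q.1 q.2) i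
          then (1 : ℝ) else 0)
    rw [← hE, ← hC]
    exact hmain
  calc k * R0 f
      = ∑ i : Fin m, (∑ t ∈ P, (∏ j, μ.p (t j)) *
          ∑ ω, A.p ω * (if SolvesInstance f (A.tree ω) (fun q => t q.1 q.2) i
            then (1 : ℝ) else 0)) * R0 f := by
        rw [hksum, Finset.sum_mul]
    _ ≤ ∑ i : Fin m, ∑ t ∈ P, (∏ j, μ.p (t j)) *
          ∑ ω, A.p ω * (TDScostI i (A.tree ω) (fun q => t q.1 q.2) : ℝ) :=
        Finset.sum_le_sum fun i _ => hkey i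
    _ = T := hTsum.symm
end
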